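/- arXiv:1605.01438 — 6 statements merged into one kernel-verified Lean document; each statement's English description precedes it below -/
import Mathlib

section
/- Let y ∈ ℝ^M, let B be a real P×M matrix, and let λ ≥ 0. Let ŵ be any minimizer of the dual objective (1/2)‖y − Bᵀw‖₂² over the box {w ∈ ℝ^P : ‖w‖_∞ ≤ λ} (such a minimizer exists by compactness). Then the TV estimate satisfies f̂_λ(y) = y − Bᵀŵ; in particular Bᵀŵ is the same vector for every minimizer ŵ of the dual problem. -/
open Matrix

/-- The total variation objective `F(f) = (1/2)‖y − f‖₂² + λ‖Bf‖₁`. -/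
noncomputable def tvF {P M : ℕ} (B : Matrix (Fin P) (Fin M) ℝ) (lam : ℝ)
    (y f : Fin M → ℝ) : ℝ :=
  (1 / 2) * ∑ i, (y i - f i) ^ 2 + lam * ∑ j, |B.mulVec f j|

/-- The dual objective `G(w) = (1/2)‖y − Bᵀw‖₂²`. -/
noncomputable def tvDualG {P M : ℕ} (B : Matrix (Fin P) (Fin M) ℝ)
    (y : Fin M → ℝ) (w : Fin P → ℝ) : ℝ :=
  (1 / 2) * ∑ i, (y i - B.transpose.mulVec w i) ^ 2


-- adjoint identity
lemma tv_adjoint {P M : ℕ} (B : Matrix (Fin P) (Fin M) ℝ) (w : Fin P → ℝ) (f : Fin M → ℝ) :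
    ∑ j, w j * B.mulVec f j = ∑ i, B.transpose.mulVec w i * f i := by
  simp only [Matrix.mulVec, dotProduct, Matrix.transpose_apply,
    Finset.mul_sum, Finset.sum_mul]
  rw [Finset.sum_comm]
  apply Finset.sum_congr rfl; intros; apply Finset.sum_congr rfl; intros; ring

-- small-eps lemma
lemma tv_eps_le {a b : ℝ} (h : ∀ ε : ℝ, 0 < ε → ε ≤ 1 → a ≤ ε * b) : a ≤ 0 := by
  rcases le_or_gt b 0 with hb | hb
  · have := h 1 one_pos le_rfl; linarith
  · have : ∀ δ > 0, a ≤ 0 + δ := by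
      intro δ hδ
      have hε : (0:ℝ) < min 1 (δ / b) := lt_min one_pos (div_pos hδ hb)
      have := h (min 1 (δ / b)) hε (min_le_left _ _)
      have h2 : min 1 (δ / b) * b ≤ (δ / b) * b :=
        mul_le_mul_of_nonneg_right (min_le_right _ _) hb.le
      rw [div_mul_cancel₀ _ hb.ne'] at h2
      linarith
    exact le_of_forall_pos_le_add this

-- quadratic expansion of the dual objective along coordinate direction j
lemma tv_quad_expand {P M : ℕ} (B : Matrix (Fin P) (Fin M) ℝ) (y : Fin M → ℝ)
    (w : Fin P → ℝ) (j : Fin P) (s : ℝ) :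
    tvDualG B y (fun k => w k + s * (if k = j then 1 else 0)) =
      tvDualG B y w - s * B.mulVec (y - B.transpose.mulVec w) j
        + s ^ 2 * ((1 / 2) * ∑ i, (B j i) ^ 2) := by
  have hmv : ∀ i, B.transpose.mulVec (fun k => w k + s * (if k = j then 1 else 0)) i
      = B.transpose.mulVec w i + s * B j i := by
    intro i
    simp only [Matrix.mulVec, dotProduct, Matrix.transpose_apply, mul_add,
      Finset.sum_add_distrib, mul_ite, mul_one, mul_zero]
    rw [Finset.sum_ite_eq' Finset.univ j (fun k => B k i * s)]
    simp [mul_comm]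
  have hc : B.mulVec (y - B.transpose.mulVec w) j
      = ∑ i, B j i * (y i - B.transpose.mulVec w i) := by
    simp [Matrix.mulVec, dotProduct]
  unfold tvDualG
  rw [hc]
  have : ∀ i, (y i - B.transpose.mulVec (fun k => w k + s * (if k = j then 1 else 0)) i) ^ 2
      = (y i - B.transpose.mulVec w i) ^ 2
        - 2 * s * (B j i * (y i - B.transpose.mulVec w i)) + s ^ 2 * (B j i) ^ 2 := by
    intro i; rw [hmv i]; ring
  rw [Finset.sum_congr rfl (fun i _ => this i)]
  rw [Finset.sum_add_distrib, Finset.sum_sub_distrib, ← Finset.mul_sum, ← Finset.mul_sum]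
  ring

-- KKT / complementary slackness at a dual minimizer
lemma tv_kkt {P M : ℕ} (B : Matrix (Fin P) (Fin M) ℝ) (y : Fin M → ℝ)
    (lam : ℝ) (hlam : 0 ≤ lam) (w : Fin P → ℝ) (hw : ∀ j, |w j| ≤ lam)
    (hmin : ∀ w' : Fin P → ℝ, (∀ j, |w' j| ≤ lam) → tvDualG B y w ≤ tvDualG B y w')
    (j : Fin P) :
    lam * |B.mulVec (y - B.transpose.mulVec w) j|
      = w j * B.mulVec (y - B.transpose.mulVec w) j := by
  set c := B.mulVec (y - B.transpose.mulVec w) j with hcdef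
  set σ : ℝ := if 0 ≤ c then 1 else -1 with hσ
  have hσc : σ * c = |c| := by
    rcases le_or_gt 0 c with h | h
    · simp [hσ, h, abs_of_nonneg h]
    · simp [hσ, not_le.2 h, abs_of_neg h]
  have hσabs : |σ| = 1 := by
    rcases le_or_gt 0 c with h | h
    · simp [hσ, h]
    · rw [hσ, if_neg (not_le.2 h)]; simp
  set d : ℝ := σ * lam - w j with hd
  -- for all ε ∈ (0,1], feasibility of perturbed point gives d*c ≤ ε * (d^2 * ((1/2)*∑ (B j i)^2))
  have hkey : d * c ≤ 0 := by
    apply tv_eps_le (b := d ^ 2 * ((1 / 2) * ∑ i, (B j i) ^ 2))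
    intro ε hε hε1
    set w' : Fin P → ℝ := fun k => w k + (ε * d) * (if k = j then 1 else 0) with hw'
    have hfeas : ∀ k, |w' k| ≤ lam := by
      intro k
      by_cases hk : k = j
      · subst hk
        have : w' k = (1 - ε) * w k + ε * (σ * lam) := by simp [hw', hd]; ring
        rw [this]
        calc |(1 - ε) * w k + ε * (σ * lam)| ≤ |(1 - ε) * w k| + |ε * (σ * lam)| := abs_add_le _ _
          _ = (1 - ε) * |w k| + ε * lam := by
              rw [abs_mul, abs_mul, abs_mul, hσabs, abs_of_nonneg (by linarith : (0:ℝ) ≤ 1 - ε),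
                abs_of_nonneg hε.le, abs_of_nonneg hlam, one_mul]
          _ ≤ (1 - ε) * lam + ε * lam := by
              have := hw k; nlinarith
          _ = lam := by ring
      · simp [hw', hk, hw k]
    have h1 := hmin w' hfeas
    have h2 := tv_quad_expand B y w j (ε * d)
    rw [← hw'] at h2
    rw [h2, ← hcdef] at h1
    nlinarith [h1]
  have h1 : lam * |c| ≤ w j * c := by
    have hk2 : (σ * lam - w j) * c ≤ 0 := by rw [← hd]; exact hkey
    have : σ * lam * c ≤ w j * c := by nlinarith [hk2]
    calc lam * |c| = σ * lam * c := by rw [← hσc]; ring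
      _ ≤ w j * c := this
  have h2 : w j * c ≤ lam * |c| := by
    calc w j * c ≤ |w j * c| := le_abs_self _
      _ = |w j| * |c| := abs_mul _ _
      _ ≤ lam * |c| := mul_le_mul_of_nonneg_right (hw j) (abs_nonneg _)
  linarith

lemma tv_primal_opt {P M : ℕ} (B : Matrix (Fin P) (Fin M) ℝ) (y : Fin M → ℝ)
    (lam : ℝ) (hlam : 0 ≤ lam) (w : Fin P → ℝ) (hw : ∀ j, |w j| ≤ lam)
    (hmin : ∀ w' : Fin P → ℝ, (∀ j, |w' j| ≤ lam) → tvDualG B y w ≤ tvDualG B y w')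
    (f : Fin M → ℝ) :
    tvF B lam y (y - B.transpose.mulVec w) ≤ tvF B lam y f := by
  set u := B.transpose.mulVec w with hu
  -- Step A : lam * ∑ |B(y-u)| = ∑ w j * (B(y-u)) j
  have hA : lam * ∑ j, |B.mulVec (y - u) j| = ∑ j, w j * B.mulVec (y - u) j := by
    rw [Finset.mul_sum]
    exact Finset.sum_congr rfl fun j _ => tv_kkt B y lam hlam w hw hmin j
  -- Step B : ∑ w j * (Bf) j ≤ lam * ∑ |Bf|
  have hB : ∑ j, w j * B.mulVec f j ≤ lam * ∑ j, |B.mulVec f j| := by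
    rw [Finset.mul_sum]
    apply Finset.sum_le_sum
    intro j _
    calc w j * B.mulVec f j ≤ |w j * B.mulVec f j| := le_abs_self _
      _ = |w j| * |B.mulVec f j| := abs_mul _ _
      _ ≤ lam * |B.mulVec f j| := mul_le_mul_of_nonneg_right (hw j) (abs_nonneg _)
  -- adjoints
  have hadj1 : ∑ j, w j * B.mulVec (y - u) j = ∑ i, u i * (y i - u i) := by
    rw [tv_adjoint]; exact Finset.sum_congr rfl fun i _ => by rw [← hu]; simp
  have hadj2 : ∑ j, w j * B.mulVec f j = ∑ i, u i * f i := by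
    rw [tv_adjoint]
  -- quadratic part of F at f̂
  have hq : (1 / 2 : ℝ) * ∑ i, (y i - (y - u) i) ^ 2 = ∑ i, (1 / 2) * (u i) ^ 2 := by
    rw [Finset.mul_sum]; exact Finset.sum_congr rfl fun i _ => by simp
  -- Step D : quadratic inequality
  have hD : ∑ i, (1 / 2) * (u i) ^ 2 + ∑ i, u i * (y i - u i)
      ≤ (1 / 2) * ∑ i, (y i - f i) ^ 2 + ∑ i, u i * f i := by
    have h0 : (0:ℝ) ≤ ∑ i, (1 / 2) * (y i - f i - u i) ^ 2 :=
      Finset.sum_nonneg fun i _ => by positivity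
    have h1 : ∑ i, (1 / 2) * (y i - f i - u i) ^ 2
        = ((1 / 2) * ∑ i, (y i - f i) ^ 2 + ∑ i, u i * f i)
          - (∑ i, (1 / 2) * (u i) ^ 2 + ∑ i, u i * (y i - u i)) := by
      rw [Finset.mul_sum, ← Finset.sum_add_distrib, ← Finset.sum_add_distrib,
        ← Finset.sum_sub_distrib]
      exact Finset.sum_congr rfl fun i _ => by ring
    linarith
  unfold tvF
  rw [hq, hA, hadj1]
  calc ∑ i, (1 / 2) * (u i) ^ 2 + ∑ i, u i * (y i - u i)
      ≤ (1 / 2) * ∑ i, (y i - f i) ^ 2 + ∑ i, u i * f i := hD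
    _ = (1 / 2) * ∑ i, (y i - f i) ^ 2 + ∑ j, w j * B.mulVec f j := by rw [hadj2]
    _ ≤ (1 / 2) * ∑ i, (y i - f i) ^ 2 + lam * ∑ j, |B.mulVec f j| := by linarith [hB]

lemma tv_dual_exists {P M : ℕ} (B : Matrix (Fin P) (Fin M) ℝ) (y : Fin M → ℝ)
    (lam : ℝ) (hlam : 0 ≤ lam) :
    ∃ w : Fin P → ℝ, (∀ j, |w j| ≤ lam) ∧
      ∀ w' : Fin P → ℝ, (∀ j, |w' j| ≤ lam) → tvDualG B y w ≤ tvDualG B y w' := by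
  set S : Set (Fin P → ℝ) := Set.pi Set.univ (fun _ => Set.Icc (-lam) lam) with hS
  have hmem : ∀ w : Fin P → ℝ, w ∈ S ↔ ∀ j, |w j| ≤ lam := by
    intro w
    simp only [hS, Set.mem_univ_pi, Set.mem_Icc, abs_le]
  have hcomp : IsCompact S := isCompact_univ_pi fun _ => isCompact_Icc
  have hne : S.Nonempty := ⟨0, (hmem 0).2 fun j => by simpa using hlam⟩
  have hcont : Continuous (tvDualG B y) := by
    unfold tvDualG
    apply continuous_const.mul
    apply continuous_finset_sum
    intro i _
    apply Continuous.pow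
    apply continuous_const.sub
    simp only [Matrix.mulVec, dotProduct]
    exact continuous_finset_sum _ fun j _ => continuous_const.mul (continuous_apply j)
  obtain ⟨w, hwS, hwmin⟩ := hcomp.exists_isMinOn hne hcont.continuousOn
  exact ⟨w, (hmem w).1 hwS, fun w' hw' => hwmin ((hmem w').2 hw')⟩

lemma tv_dual_unique {P M : ℕ} (B : Matrix (Fin P) (Fin M) ℝ) (y : Fin M → ℝ)
    (lam : ℝ) (w₁ w₂ : Fin P → ℝ)
    (h₁ : ∀ j, |w₁ j| ≤ lam)
    (hm₁ : ∀ w' : Fin P → ℝ, (∀ j, |w' j| ≤ lam) → tvDualG B y w₁ ≤ tvDualG B y w')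
    (h₂ : ∀ j, |w₂ j| ≤ lam)
    (hm₂ : ∀ w' : Fin P → ℝ, (∀ j, |w' j| ≤ lam) → tvDualG B y w₂ ≤ tvDualG B y w') :
    B.transpose.mulVec w₁ = B.transpose.mulVec w₂ := by
  set u₁ := B.transpose.mulVec w₁ with hu₁
  set u₂ := B.transpose.mulVec w₂ with hu₂
  set w : Fin P → ℝ := fun j => (w₁ j + w₂ j) / 2 with hwdef
  have hfeas : ∀ j, |w j| ≤ lam := by
    intro j
    show |(w₁ j + w₂ j) / 2| ≤ lam
    rw [abs_div, abs_two]
    have h0 := abs_add_le (w₁ j) (w₂ j)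
    have ha := h₁ j; have hb := h₂ j
    linarith
  have hmv : ∀ i, B.transpose.mulVec w i = (u₁ i + u₂ i) / 2 := by
    intro i
    have e1 : B.transpose.mulVec w i
        = ∑ x, (B.transpose i x * w₁ x / 2 + B.transpose i x * w₂ x / 2) := by
      simp only [Matrix.mulVec, dotProduct, hwdef]
      exact Finset.sum_congr rfl fun x _ => by ring
    have e2 : u₁ i = ∑ x, B.transpose i x * w₁ x := by
      simp [hu₁, Matrix.mulVec, dotProduct]
    have e3 : u₂ i = ∑ x, B.transpose i x * w₂ x := by
      simp [hu₂, Matrix.mulVec, dotProduct]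
    rw [e1, e2, e3, Finset.sum_add_distrib, ← Finset.sum_div, ← Finset.sum_div]
    ring
  have hGmid : tvDualG B y w
      = (tvDualG B y w₁ + tvDualG B y w₂) / 2 - (1 / 8) * ∑ i, (u₁ i - u₂ i) ^ 2 := by
    unfold tvDualG
    rw [← hu₁, ← hu₂]
    rw [Finset.sum_congr rfl fun i _ => by rw [hmv i]]
    rw [Finset.mul_sum, Finset.mul_sum, Finset.mul_sum, Finset.mul_sum]
    have pt : ∀ i, (1/2 : ℝ)*(y i - (u₁ i + u₂ i)/2)^2
        = ((1/2)*(y i - u₁ i)^2 + (1/2)*(y i - u₂ i)^2)/2 - (1/8)*(u₁ i - u₂ i)^2 :=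
      fun i => by ring
    rw [Finset.sum_congr rfl fun i _ => pt i, Finset.sum_sub_distrib, ← Finset.sum_div,
      Finset.sum_add_distrib]
  have hle₁ := hm₁ w hfeas
  have hle₂ := hm₂ w hfeas
  have hsum : ∑ i, (u₁ i - u₂ i) ^ 2 ≤ 0 := by
    rw [hGmid] at hle₁ hle₂; linarith
  funext i
  have hterm : (u₁ i - u₂ i) ^ 2 = 0 := by
    have h := Finset.sum_nonneg (fun k (_ : k ∈ Finset.univ) => sq_nonneg (u₁ k - u₂ k))
    have h2 : (u₁ i - u₂ i) ^ 2 ≤ ∑ k, (u₁ k - u₂ k) ^ 2 :=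
      Finset.single_le_sum (f := fun k => (u₁ k - u₂ k) ^ 2)
        (fun k _ => sq_nonneg _) (Finset.mem_univ i)
    nlinarith [sq_nonneg (u₁ i - u₂ i)]
  have := pow_eq_zero_iff (n := 2) (by norm_num) |>.1 hterm
  linarith [sub_eq_zero.1 this]

/-- A minimizer `ŵ` of the dual objective over the box `{‖w‖_∞ ≤ λ}` exists,
and for every such minimizer the TV estimate satisfies `f̂_λ(y) = y − Bᵀŵ` (i.e. `y − Bᵀŵ`
minimizes the TV objective); in particular `Bᵀŵ` is the same vector for every dual
minimizer. -/
theorem tv_estimate_from_dual_minimizer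
    (M P : ℕ) (y : Fin M → ℝ) (B : Matrix (Fin P) (Fin M) ℝ)
    (lam : ℝ) (hlam : 0 ≤ lam) :
    (∃ w : Fin P → ℝ, (∀ j, |w j| ≤ lam) ∧
        ∀ w' : Fin P → ℝ, (∀ j, |w' j| ≤ lam) → tvDualG B y w ≤ tvDualG B y w') ∧
    (∀ w : Fin P → ℝ, (∀ j, |w j| ≤ lam) →
      (∀ w' : Fin P → ℝ, (∀ j, |w' j| ≤ lam) → tvDualG B y w ≤ tvDualG B y w') →
      ∀ f : Fin M → ℝ,
        tvF B lam y (y - B.transpose.mulVec w) ≤ tvF B lam y f) ∧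
    (∀ w₁ w₂ : Fin P → ℝ,
      (∀ j, |w₁ j| ≤ lam) →
      (∀ w' : Fin P → ℝ, (∀ j, |w' j| ≤ lam) → tvDualG B y w₁ ≤ tvDualG B y w') →
      (∀ j, |w₂ j| ≤ lam) →
      (∀ w' : Fin P → ℝ, (∀ j, |w' j| ≤ lam) → tvDualG B y w₂ ≤ tvDualG B y w') →
      B.transpose.mulVec w₁ = B.transpose.mulVec w₂) := by
  refine ⟨tv_dual_exists B y lam hlam, ?_, ?_⟩
  · intro w hw hmin f
    exact tv_primal_opt B y lam hlam w hw hmin f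
  · intro w₁ w₂ h₁ hm₁ h₂ hm₂
    exact tv_dual_unique B y lam w₁ w₂ h₁ hm₁ h₂ hm₂
end

section
/- Let B be a real P×M matrix with B𝟙 = 0 and with {v ∈ ℝ^M : Σ_i v_i = 0} contained in the range of Bᵀ. Let y ∈ ℝ^M with mean ȳ = (1/M)Σ_i y_i, define Λ(y) = min{‖w‖_∞ : w ∈ ℝ^P, Bᵀw = y − ȳ𝟙}, and let λ ≥ 0. Then the TV estimate equals the best constant fit, f̂_λ(y) = ȳ𝟙, if and only if λ ≥ Λ(y). -/
open Matrix

/-- `Λ(y) = min{‖w‖_∞ : Bᵀw = y − ȳ𝟙}`, where `ȳ` is the mean of `y` and the norm on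
`Fin P → ℝ` is the sup norm. -/
noncomputable def tvLam {P M : ℕ} (B : Matrix (Fin P) (Fin M) ℝ) (y : Fin M → ℝ) : ℝ :=
  sInf ((fun w : Fin P → ℝ => ‖w‖) ''
    {w : Fin P → ℝ | B.transpose.mulVec w = fun i => y i - (∑ k, y k) / (M : ℝ)})

/-- Adjoint identity `⟨Bᵀw, v⟩ = ⟨w, Bv⟩`. -/
lemma tv_dot_adj {P M : ℕ} (B : Matrix (Fin P) (Fin M) ℝ) (w : Fin P → ℝ) (v : Fin M → ℝ) :
    ∑ i, B.transpose.mulVec w i * v i = ∑ j, w j * B.mulVec v j := by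
  simp only [Matrix.mulVec, dotProduct, Matrix.transpose_apply, Finset.sum_mul,
    Finset.mul_sum]
  rw [Finset.sum_comm]
  exact Finset.sum_congr rfl fun j _ => Finset.sum_congr rfl fun i _ => by ring

/-- If `B𝟙 = 0` then subtracting a constant does not change `Bf`. -/
lemma tv_mulVec_shift {P M : ℕ} (B : Matrix (Fin P) (Fin M) ℝ)
    (hB1 : B.mulVec (fun _ => (1 : ℝ)) = 0) (f : Fin M → ℝ) (t : ℝ) :
    B.mulVec (fun i => f i - t) = B.mulVec f := by
  funext j
  have h := congrFun hB1 j
  simp only [Matrix.mulVec, dotProduct, Pi.zero_apply, mul_one] at h ⊢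
  simp only [mul_sub, Finset.sum_sub_distrib]
  have h2 : ∑ i, B j i * t = (∑ i, B j i) * t := by rw [Finset.sum_mul]
  rw [h2, h, zero_mul, sub_zero]

lemma tv_mulVec_const {P M : ℕ} (B : Matrix (Fin P) (Fin M) ℝ)
    (hB1 : B.mulVec (fun _ => (1 : ℝ)) = 0) (t : ℝ) :
    B.mulVec (fun _ => t) = 0 := by
  funext j
  have h := congrFun hB1 j
  simp only [Matrix.mulVec, dotProduct, Pi.zero_apply, mul_one] at h ⊢
  rw [show (∑ i, B j i * t) = (∑ i, B j i) * t by rw [Finset.sum_mul], h, zero_mul]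

/-- If `B𝟙 = 0` and the mean-zero subspace is contained in the range of `Bᵀ`,
then the TV estimate equals the best constant fit `ȳ𝟙` if and only if `λ ≥ Λ(y)`. -/
theorem tv_constant_fit_iff_lam_ge
    (M P : ℕ) (hM : 1 ≤ M) (B : Matrix (Fin P) (Fin M) ℝ)
    (hB1 : B.mulVec (fun _ => (1 : ℝ)) = 0)
    (hrange : {v : Fin M → ℝ | ∑ i, v i = 0} ⊆ Set.range B.transpose.mulVec)
    (y : Fin M → ℝ) (lam : ℝ) (hlam : 0 ≤ lam) :
    (∀ f : Fin M → ℝ,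
        tvF B lam y (fun _ => (∑ k, y k) / (M : ℝ)) ≤ tvF B lam y f) ↔
      tvLam B y ≤ lam := by
  have hM0 : (M : ℝ) ≠ 0 := by positivity
  set ybar : ℝ := (∑ k, y k) / (M : ℝ) with hybar
  have hBc : B.mulVec (fun _ => ybar) = 0 := tv_mulVec_const B hB1 ybar
  have hTVc : tvF B lam y (fun _ => ybar) = (1 / 2) * ∑ i, (y i - ybar) ^ 2 := by
    simp [tvF, hBc]
  -- the feasible set of the dual problem
  have hsum0 : ∑ i, (y i - ybar) = 0 := by
    rw [Finset.sum_sub_distrib, Finset.sum_const, Finset.card_univ, Fintype.card_fin, hybar, nsmul_eq_mul]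
    field_simp
    ring
  constructor
  · -- minimality implies dual feasibility with ‖w‖ ≤ λ
    intro hmin
    -- first-order optimality condition
    have hgrad : ∀ d : Fin M → ℝ,
        (∑ i, (y i - ybar) * d i) ≤ lam * ∑ j, |B.mulVec d j| := by
      intro d
      set G := ∑ i, (y i - ybar) * d i with hG
      set s := ∑ i, (d i) ^ 2 with hs'
      set n := ∑ j, |B.mulVec d j| with hn'
      have hs : 0 ≤ s := Finset.sum_nonneg fun i _ => sq_nonneg _
      have key : ∀ t : ℝ, 0 < t → G ≤ lam * n + t * s / 2 := by
        intro t ht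
        have hf := hmin (fun i => ybar + t * d i)
        have hBf : B.mulVec (fun i => ybar + t * d i) = fun j => t * B.mulVec d j := by
          funext j
          have h := congrFun hBc j
          simp only [Matrix.mulVec, dotProduct, Pi.zero_apply] at h ⊢
          simp only [mul_add, Finset.sum_add_distrib, h, Finset.mul_sum]
          rw [zero_add]
          exact Finset.sum_congr rfl fun i _ => by ring
        have habs : ∑ j, |t * B.mulVec d j| = t * n := by
          rw [hn', Finset.mul_sum]
          exact Finset.sum_congr rfl fun j _ => by
            rw [abs_mul, abs_of_pos ht]
        have e1 : ∑ i, (y i - (ybar + t * d i)) ^ 2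
            = ∑ i, (y i - ybar) ^ 2 - 2 * t * G + t ^ 2 * s := by
          rw [hG, hs', Finset.mul_sum, Finset.mul_sum, ← Finset.sum_sub_distrib,
            ← Finset.sum_add_distrib]
          exact Finset.sum_congr rfl fun i _ => by ring
        have hexp : tvF B lam y (fun i => ybar + t * d i)
            = (1 / 2) * ∑ i, (y i - ybar) ^ 2 - t * G + t ^ 2 / 2 * s + lam * (t * n) := by
          unfold tvF
          rw [hBf, habs, e1]
          ring
        rw [hTVc, hexp] at hf
        have h2 : t * G ≤ t ^ 2 / 2 * s + lam * (t * n) := by linarith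
        have h3 : t * G ≤ t * (t * s / 2 + lam * n) := by
          calc t * G ≤ t ^ 2 / 2 * s + lam * (t * n) := h2
            _ = t * (t * s / 2 + lam * n) := by ring
        have := le_of_mul_le_mul_left (by linarith [h3] : t * G ≤ t * (t * s / 2 + lam * n)) ht
        linarith
      by_contra hcon
      push_neg at hcon
      have hε : 0 < G - lam * n := by linarith
      set t : ℝ := (G - lam * n) / (s + 1) with htdef
      have htpos : 0 < t := by positivity
      have hst : t * s = (G - lam * n) - t := by
        rw [htdef]
        field_simp
        ring
      have hkey := key t htpos
      linarith
    -- separation argument: (y - ȳ𝟙) ∈ Bᵀ(closedBall 0 λ)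
    set g : Fin M → ℝ := fun i => y i - ybar with hg
    set K : Set (Fin M → ℝ) := (fun w => B.transpose.mulVec w) '' Metric.closedBall 0 lam
      with hK
    have hfun : ⇑(Matrix.mulVecLin B.transpose) = fun w => B.transpose.mulVec w := by
      funext w; simp only [Matrix.mulVecLin_apply]
    have hKconv : Convex ℝ K := by
      have := (convex_closedBall (0 : Fin P → ℝ) lam).linear_image (Matrix.mulVecLin B.transpose)
      rwa [hfun] at this
    have hKcomp : IsCompact K := by
      have := (isCompact_closedBall (0 : Fin P → ℝ) lam).image
        (Matrix.mulVecLin B.transpose).continuous_of_finiteDimensional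
      rwa [hfun] at this
    have hgK : g ∈ K := by
      by_contra hng
      obtain ⟨φ, u, hlt, hgt⟩ := geometric_hahn_banach_closed_point hKconv hKcomp.isClosed hng
      set d : Fin M → ℝ := fun i => φ (Pi.single i 1) with hd
      have hφ : ∀ v : Fin M → ℝ, φ v = ∑ i, v i * d i := by
        intro v
        have hv : v = ∑ i, v i • (Pi.single i (1 : ℝ) : Fin M → ℝ) := by
          funext k
          simp [Finset.sum_apply, Pi.single_apply]
        conv_lhs => rw [hv]
        rw [map_sum]
        exact Finset.sum_congr rfl fun i _ => by rw [_root_.map_smul, smul_eq_mul, hd]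
      set wstar : Fin P → ℝ := fun j => if 0 ≤ B.mulVec d j then lam else -lam with hwstar
      have hwball : wstar ∈ Metric.closedBall (0 : Fin P → ℝ) lam := by
        rw [mem_closedBall_zero_iff]
        rw [pi_norm_le_iff_of_nonneg hlam]
        intro j
        rw [Real.norm_eq_abs, hwstar]
        by_cases hj : 0 ≤ B.mulVec d j
        · simp [hj, abs_of_nonneg hlam]
        · simp [hj, abs_of_nonneg hlam]
      have h1 : φ (B.transpose.mulVec wstar) < u := hlt _ ⟨wstar, hwball, rfl⟩
      have h2 : φ (B.transpose.mulVec wstar) = lam * ∑ j, |B.mulVec d j| := by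
        rw [hφ, tv_dot_adj, Finset.mul_sum]
        refine Finset.sum_congr rfl fun j _ => ?_
        by_cases hj : 0 ≤ B.mulVec d j
        · rw [hwstar]; simp only [hj, if_true]
          rw [abs_of_nonneg hj]
        · rw [hwstar]; simp only [hj, if_false]
          rw [abs_of_neg (lt_of_not_ge hj)]
          ring
      have h3 : φ g = ∑ i, (y i - ybar) * d i := by rw [hφ]
      have h4 := hgrad d
      rw [h3] at hgt
      rw [h2] at h1
      linarith
    obtain ⟨w, hwball, hwe⟩ := hgK
    have hwmem : ‖w‖ ∈ ((fun w : Fin P → ℝ => ‖w‖) ''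
        {w : Fin P → ℝ | B.transpose.mulVec w = fun i => y i - (∑ k, y k) / (M : ℝ)}) :=
      ⟨w, hwe, rfl⟩
    have hbdd : BddBelow ((fun w : Fin P → ℝ => ‖w‖) ''
        {w : Fin P → ℝ | B.transpose.mulVec w = fun i => y i - (∑ k, y k) / (M : ℝ)}) :=
      ⟨0, fun x ⟨w', _, hx⟩ => hx ▸ norm_nonneg w'⟩
    calc tvLam B y ≤ ‖w‖ := csInf_le hbdd hwmem
      _ ≤ lam := by rwa [mem_closedBall_zero_iff] at hwball
  · -- dual feasibility implies minimality
    intro h f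
    refine le_of_forall_pos_le_add fun ε hε => ?_
    set S := ∑ j, |B.mulVec f j| with hSdef
    have hS : 0 ≤ S := Finset.sum_nonneg fun j _ => abs_nonneg _
    set δ : ℝ := ε / (S + 1) with hδ
    have hδpos : 0 < δ := by positivity
    -- the feasible set is nonempty
    obtain ⟨w0, hw0⟩ := hrange (Set.mem_setOf_eq ▸ hsum0 :
      (fun i => y i - ybar) ∈ {v : Fin M → ℝ | ∑ i, v i = 0})
    have hne : ((fun w : Fin P → ℝ => ‖w‖) ''
        {w : Fin P → ℝ | B.transpose.mulVec w = fun i => y i - (∑ k, y k) / (M : ℝ)}).Nonempty :=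
      ⟨‖w0‖, w0, by rw [Set.mem_setOf_eq, hw0], rfl⟩
    have hlt : tvLam B y < lam + δ := lt_of_le_of_lt h (by linarith)
    obtain ⟨x, ⟨w, hw, rfl⟩, hxlt⟩ := exists_lt_of_csInf_lt hne hlt
    rw [Set.mem_setOf_eq] at hw
    -- the key inner-product bound
    have hBfc : B.mulVec (fun i => f i - ybar) = B.mulVec f := tv_mulVec_shift B hB1 f ybar
    have hdot : ∑ i, (y i - ybar) * (f i - ybar) = ∑ j, w j * B.mulVec f j := by
      rw [← hBfc, ← tv_dot_adj, hw]
    have hbound : ∑ j, w j * B.mulVec f j ≤ (lam + δ) * S := by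
      rw [hSdef, Finset.mul_sum]
      refine Finset.sum_le_sum fun j _ => ?_
      calc w j * B.mulVec f j ≤ |w j * B.mulVec f j| := le_abs_self _
        _ = |w j| * |B.mulVec f j| := abs_mul _ _
        _ ≤ (lam + δ) * |B.mulVec f j| := by
            apply mul_le_mul_of_nonneg_right _ (abs_nonneg _)
            calc |w j| = ‖w j‖ := (Real.norm_eq_abs _).symm
              _ ≤ ‖w‖ := norm_le_pi_norm w j
              _ ≤ lam + δ := le_of_lt hxlt
    have hQ : 0 ≤ ∑ i, (f i - ybar) ^ 2 := Finset.sum_nonneg fun i _ => sq_nonneg _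
    have hexp : tvF B lam y f = tvF B lam y (fun _ => ybar)
        + (1 / 2) * ∑ i, (f i - ybar) ^ 2 - ∑ i, (y i - ybar) * (f i - ybar) + lam * S := by
      rw [hTVc]
      unfold tvF
      rw [hSdef]
      have e1 : ∑ i, (y i - f i) ^ 2
          = ∑ i, (y i - ybar) ^ 2 + ∑ i, (f i - ybar) ^ 2
            - 2 * ∑ i, (y i - ybar) * (f i - ybar) := by
        rw [Finset.mul_sum, ← Finset.sum_add_distrib, ← Finset.sum_sub_distrib]
        exact Finset.sum_congr rfl fun i _ => by ring
      rw [e1]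
      ring
    have hδS : δ * S ≤ ε := by
      rw [hδ, div_mul_eq_mul_div, div_le_iff₀ (by linarith : (0:ℝ) < S + 1)]
      nlinarith
    calc tvF B lam y (fun _ => ybar)
        = tvF B lam y f - (1 / 2) * ∑ i, (f i - ybar) ^ 2
          + ∑ i, (y i - ybar) * (f i - ybar) - lam * S := by rw [hexp]; ring
      _ ≤ tvF B lam y f + ∑ j, w j * B.mulVec f j - lam * S := by
          rw [hdot]; linarith
      _ ≤ tvF B lam y f + (lam + δ) * S - lam * S := by linarith
      _ = tvF B lam y f + δ * S := by ring
      _ ≤ tvF B lam y f + ε := by linarith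
end

section
/- Let N ≥ 2, σ > 0, μ ∈ ℝ, let Y₁,…,Y_N be i.i.d. N(μ,σ²) with sample mean Ȳ, and let W_i = Σ_{k=1}^i (Y_k − Ȳ). Then for every c > 0, ℙ( max_{1≤i≤N−1} W_i > σ√N·c ) ≤ exp(−2c²). -/
open MeasureTheory ProbabilityTheory

open scoped ENNReal NNReal

lemma gauss_pdf_mul (μ : ℝ) (v : ℝ≥0) (hv : v ≠ 0) (t x : ℝ) :
    gaussianPDFReal μ v x * Real.exp (t * (x - μ) / v - t ^ 2 / (2 * v))
      = gaussianPDFReal (μ + t) v x := by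
  have hv' : (0:ℝ) < v := by positivity
  unfold gaussianPDFReal
  rw [mul_assoc, ← Real.exp_add]
  congr 1
  field_simp
  ring

lemma gauss_tilt (μ : ℝ) (v : ℝ≥0) (hv : v ≠ 0) (t : ℝ) (h : ℝ → ℝ≥0∞) (hh : Measurable h) :
    ∫⁻ x, h x * ENNReal.ofReal (Real.exp (t * (x - μ) / v - t ^ 2 / (2 * v)))
        ∂(gaussianReal μ v)
      = ∫⁻ x, h (x + t) ∂(gaussianReal μ v) := by
  have hmap : ∫⁻ x, h (x + t) ∂(gaussianReal μ v) = ∫⁻ x, h x ∂(gaussianReal (μ + t) v) := by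
    rw [← gaussianReal_map_add_const t, lintegral_map hh (measurable_id'.add_const t)]
  rw [hmap, gaussianReal_of_var_ne_zero _ hv, gaussianReal_of_var_ne_zero _ hv,
    lintegral_withDensity_eq_lintegral_mul _ (measurable_gaussianPDF _ _)
      (show Measurable (fun x => h x * ENNReal.ofReal (Real.exp (t * (x - μ) / v - t ^ 2 / (2 * v)))) by fun_prop),
    lintegral_withDensity_eq_lintegral_mul _ (measurable_gaussianPDF _ _) hh]
  congr 1
  ext x
  simp only [Pi.mul_apply, gaussianPDF]
  rw [mul_comm (h x), ← mul_assoc, ← ENNReal.ofReal_mul (gaussianPDFReal_nonneg _ _ _),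
    gauss_pdf_mul μ v hv t x]

noncomputable def dfac (μ : ℝ) (v : ℝ≥0) (t x : ℝ) : ℝ≥0∞ :=
  ENNReal.ofReal (Real.exp (t * (x - μ) / v - t ^ 2 / (2 * v)))

lemma measurable_dfac (μ : ℝ) (v : ℝ≥0) (t : ℝ) : Measurable (dfac μ v t) := by
  unfold dfac; fun_prop

lemma pi_tilt_one (N : ℕ) (μ : ℝ) (v : ℝ≥0) (hv : v ≠ 0) (i : Fin N) (t : ℝ)
    (H : (Fin N → ℝ) → ℝ≥0∞) (hH : Measurable H) :
    ∫⁻ y, H y * dfac μ v t (y i) ∂(Measure.pi fun _ : Fin N => gaussianReal μ v)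
      = ∫⁻ y, H (Function.update y i (y i + t))
          ∂(Measure.pi fun _ : Fin N => gaussianReal μ v) := by
  have hf1 : Measurable fun y : Fin N → ℝ => H y * dfac μ v t (y i) :=
    hH.mul ((measurable_dfac μ v t).comp (measurable_pi_apply i))
  have hf2 : Measurable fun y : Fin N → ℝ => H (Function.update y i (y i + t)) := by
    apply hH.comp
    have h1 : Measurable fun y : Fin N → ℝ => y i + t := by fun_prop
    exact measurable_update'.comp (measurable_id.prodMk h1)
  rw [lintegral_eq_lmarginal_univ (fun _ => 0), lintegral_eq_lmarginal_univ (fun _ => 0),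
    lmarginal_erase' _ hf1 (Finset.mem_univ i), lmarginal_erase' _ hf2 (Finset.mem_univ i)]
  congr 1
  ext x
  have key : ∀ s : ℝ, H (Function.update x i s) * dfac μ v t s
      = (fun z => H z * dfac μ v t (z i)) (Function.update x i s) := by
    intro s; simp [Function.update_self]
  calc ∫⁻ s, (fun z => H z * dfac μ v t (z i)) (Function.update x i s) ∂(gaussianReal μ v)
      = ∫⁻ s, (fun z => H (Function.update x i z)) s
          * ENNReal.ofReal (Real.exp (t * (s - μ) / v - t ^ 2 / (2 * v))) ∂(gaussianReal μ v) := by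
        congr 1; ext s; simp [dfac, Function.update_self]
    _ = ∫⁻ s, H (Function.update x i (s + t)) ∂(gaussianReal μ v) := by
        exact gauss_tilt μ v hv t _ (hH.comp (measurable_update x))
    _ = ∫⁻ s, (fun z => H (Function.update z i (z i + t))) (Function.update x i s)
          ∂(gaussianReal μ v) := by
        congr 1; ext s
        simp only [Function.update_self, Function.update_idem]

lemma pi_tilt_finset (N : ℕ) (μ : ℝ) (v : ℝ≥0) (hv : v ≠ 0) (w : Fin N → ℝ)
    (s : Finset (Fin N)) :
    ∀ G : (Fin N → ℝ) → ℝ≥0∞, Measurable G →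
    ∫⁻ y, G y * ∏ i ∈ s, dfac μ v (w i) (y i)
        ∂(Measure.pi fun _ : Fin N => gaussianReal μ v)
      = ∫⁻ y, G (fun i => y i + if i ∈ s then w i else 0)
          ∂(Measure.pi fun _ : Fin N => gaussianReal μ v) := by
  induction s using Finset.induction_on with
  | empty => intro G hG; simp
  | @insert j s hj ih =>
    intro G hG
    have hdm : ∀ i : Fin N, Measurable fun y : Fin N → ℝ => dfac μ v (w i) (y i) :=
      fun i => (measurable_dfac μ v (w i)).comp (measurable_pi_apply i)
    have hprod : Measurable fun y : Fin N → ℝ => ∏ i ∈ s, dfac μ v (w i) (y i) := by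
      exact Finset.measurable_prod s fun i _ => hdm i
    have hshift : Measurable fun y : Fin N → ℝ => (fun i => y i + if i ∈ s then w i else 0) := by
      apply measurable_pi_iff.mpr
      intro i
      exact (measurable_pi_apply i).add_const _
    calc ∫⁻ y, G y * ∏ i ∈ insert j s, dfac μ v (w i) (y i)
          ∂(Measure.pi fun _ : Fin N => gaussianReal μ v)
        = ∫⁻ y, (fun z => G z * ∏ i ∈ s, dfac μ v (w i) (z i)) y * dfac μ v (w j) (y j)
            ∂(Measure.pi fun _ : Fin N => gaussianReal μ v) := by
          congr 1; ext y
          rw [Finset.prod_insert hj]; ring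
      _ = ∫⁻ y, (fun z => G z * ∏ i ∈ s, dfac μ v (w i) (z i))
            (Function.update y j (y j + w j))
            ∂(Measure.pi fun _ : Fin N => gaussianReal μ v) := by
          exact pi_tilt_one N μ v hv j (w j) _ (hG.mul hprod)
      _ = ∫⁻ y, (fun z => G (Function.update z j (z j + w j))) y
            * ∏ i ∈ s, dfac μ v (w i) (y i)
            ∂(Measure.pi fun _ : Fin N => gaussianReal μ v) := by
          congr 1; ext y
          simp only []
          congr 1
          apply Finset.prod_congr rfl
          intro i hi
          have : i ≠ j := fun h => hj (h ▸ hi)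
          rw [Function.update_of_ne this]
      _ = ∫⁻ y, G (Function.update (fun i => y i + if i ∈ s then w i else 0) j
            ((fun i => y i + if i ∈ s then w i else 0) j + w j))
            ∂(Measure.pi fun _ : Fin N => gaussianReal μ v) := by
          apply ih
          have h1 : Measurable fun y : Fin N → ℝ => y j + w j := by fun_prop
          exact hG.comp (measurable_update'.comp (measurable_id.prodMk h1))
      _ = ∫⁻ y, G (fun i => y i + if i ∈ insert j s then w i else 0)
            ∂(Measure.pi fun _ : Fin N => gaussianReal μ v) := by
          congr 1; ext y
          congr 1
          ext i
          by_cases hij : i = j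
          · subst hij
            simp [Function.update_self, hj]
          · rw [Function.update_of_ne hij]
            simp [Finset.mem_insert, hij]

lemma pi_tilt (N : ℕ) (μ : ℝ) (v : ℝ≥0) (hv : v ≠ 0) (w : Fin N → ℝ)
    (G : (Fin N → ℝ) → ℝ≥0∞) (hG : Measurable G) :
    ∫⁻ y, G y * ENNReal.ofReal (Real.exp (∑ i, (w i * (y i - μ) / v - w i ^ 2 / (2 * v))))
        ∂(Measure.pi fun _ : Fin N => gaussianReal μ v)
      = ∫⁻ y, G (fun i => y i + w i) ∂(Measure.pi fun _ : Fin N => gaussianReal μ v) := by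
  have := pi_tilt_finset N μ v hv w Finset.univ G hG
  simp only [Finset.mem_univ, if_true] at this
  rw [← this]
  congr 1; ext y
  congr 1
  rw [Real.exp_sum]
  rw [ENNReal.ofReal_prod_of_nonneg (fun i _ => (Real.exp_pos _).le)]
  rfl

noncomputable def Wf (N : ℕ) (j : ℕ) (y : Fin N → ℝ) : ℝ :=
  ∑ k : Fin N, if (k : ℕ) < j then y k - (∑ m, y m) / (N : ℝ) else 0

noncomputable def uu (N i : ℕ) (k : Fin N) : ℝ :=
  if (k : ℕ) < i then 0
  else if (k : ℕ) < N - 1 then ((N : ℝ) - i)⁻¹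
  else -(((N : ℝ) - 1 - i) / ((N : ℝ) - i))

lemma measurable_Wf (N j : ℕ) : Measurable (Wf N j) := by
  apply Finset.measurable_sum
  intro k _
  by_cases h : (k : ℕ) < j
  · simp only [h, if_true]; fun_prop
  · simp only [h, if_false]; exact measurable_const

lemma Wf_zero (N : ℕ) (y : Fin N → ℝ) : Wf N 0 y = 0 := by
  simp [Wf]

lemma count_lem (N j : ℕ) (hj : j ≤ N) (r : ℝ) :
    ∑ k : Fin N, (if (k : ℕ) < j then r else 0) = j * r := by
  rw [Fin.sum_univ_eq_sum_range (fun k => if k < j then r else 0)]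
  rw [← Finset.sum_subset (Finset.range_subset_range.mpr hj)
      (fun x _ hx2 => if_neg (by simpa using hx2))]
  rw [Finset.sum_congr rfl (fun x hx => if_pos (Finset.mem_range.mp hx))]
  simp [mul_comm]

lemma Wf_eq (N j : ℕ) (hj : j ≤ N) (y : Fin N → ℝ) :
    Wf N j y = (∑ k : Fin N, if (k : ℕ) < j then y k else 0)
      - (j : ℝ) * ((∑ m, y m) / (N : ℝ)) := by
  unfold Wf
  rw [← count_lem N j hj ((∑ m, y m) / (N : ℝ)), ← Finset.sum_sub_distrib]
  apply Finset.sum_congr rfl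
  intro k _
  by_cases h : (k : ℕ) < j <;> simp [h]

lemma A_top (N : ℕ) (hN : 1 ≤ N) (y : Fin N → ℝ) :
    (∑ k : Fin N, if (k : ℕ) < N - 1 then y k else 0)
      = (∑ m, y m) - y ⟨N - 1, by omega⟩ := by
  set L : Fin N := ⟨N - 1, by omega⟩ with hL
  have : ∀ k : Fin N, (if (k : ℕ) < N - 1 then y k else 0) = y k - (if k = L then y k else 0) := by
    intro k
    by_cases h : (k : ℕ) < N - 1
    · have hkL : k ≠ L := by
        intro he; rw [he] at h; simp [hL] at h
      simp [h, hkL]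
    · have hkL : k = L := by
        apply Fin.ext; simp only [hL]
        have := k.isLt; omega
      simp [h, hkL.symm]
  rw [Finset.sum_congr rfl (fun k _ => this k), Finset.sum_sub_distrib,
    Finset.sum_ite_eq' Finset.univ L y]
  simp

lemma sum_uu_mul (N i : ℕ) (hN : 2 ≤ N) (hi : i + 1 ≤ N) (z : Fin N → ℝ) :
    ∑ k, uu N i k * z k
      = (((N : ℝ) - i)⁻¹) * ((∑ k : Fin N, if (k : ℕ) < N - 1 then z k else 0)
          - (∑ k : Fin N, if (k : ℕ) < i then z k else 0))
        - (((N : ℝ) - 1 - i) / ((N : ℝ) - i)) * z ⟨N - 1, by omega⟩ := by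
  set L : Fin N := ⟨N - 1, by omega⟩ with hL
  have step : ∀ k : Fin N, uu N i k * z k
      = ((N : ℝ) - i)⁻¹ * ((if (k : ℕ) < N - 1 then z k else 0)
          - (if (k : ℕ) < i then z k else 0))
        + (if k = L then -((((N : ℝ) - 1 - i) / ((N : ℝ) - i)) * z k) else 0) := by
    intro k
    by_cases h1 : (k : ℕ) < i
    · have h2 : (k : ℕ) < N - 1 := by omega
      have h3 : k ≠ L := by intro he; rw [he] at h2; simp [hL] at h2
      simp [uu, h1, h2, h3]
    · by_cases h2 : (k : ℕ) < N - 1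
      · have h3 : k ≠ L := by intro he; rw [he] at h2; simp [hL] at h2
        simp [uu, h1, h2, h3]
      · have h3 : k = L := by
          apply Fin.ext; simp only [hL]; have := k.isLt; omega
        have h4 : ¬ (N - 1 < i) := by omega
        simp [uu, h1, h2, h3.symm, h4]
        try ring
  rw [Finset.sum_congr rfl (fun k _ => step k), Finset.sum_add_distrib, ← Finset.mul_sum,
    Finset.sum_sub_distrib,
    Finset.sum_ite_eq' Finset.univ L (fun k => -((((N : ℝ) - 1 - i) / ((N : ℝ) - i)) * z k))]
  simp only [Finset.mem_univ, if_true]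
  ring

lemma sum_uu (N i : ℕ) (hN : 2 ≤ N) (hi : i + 1 ≤ N) : ∑ k, uu N i k = 0 := by
  have hni : ((N : ℝ) - i) ≠ 0 := by
    have : (i : ℝ) + 1 ≤ (N : ℝ) := by exact_mod_cast hi
    intro h; linarith
  have h1 : ∑ k, uu N i k = ∑ k, uu N i k * (fun _ : Fin N => (1:ℝ)) k := by simp
  rw [h1, sum_uu_mul N i hN hi, count_lem N (N-1) (by omega) 1, count_lem N i (by omega) 1,
    Nat.cast_sub (by omega : 1 ≤ N)]
  field_simp
  push_cast; ring

lemma sum_uu_sq (N i : ℕ) (hN : 2 ≤ N) (hi : i + 1 ≤ N) :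
    ∑ k, (uu N i k) ^ 2 = 1 - ((N : ℝ) - i)⁻¹ := by
  have hN1 : (1:ℝ) ≤ (N : ℝ) - i := by
    have : (i : ℝ) + 1 ≤ (N : ℝ) := by exact_mod_cast hi
    linarith
  have hni : ((N : ℝ) - i) ≠ 0 := by linarith
  have hb : ∀ k : Fin N, (uu N i k) ^ 2
      = ((if (k:ℕ) < N - 1 then (((N:ℝ)-i)⁻¹) ^ 2 else (((N:ℝ)-1-i)/((N:ℝ)-i)) ^ 2)
          - (if (k:ℕ) < i then (((N:ℝ)-i)⁻¹) ^ 2 else 0)) := by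
    intro k
    by_cases h1 : (k:ℕ) < i
    · have h2 : (k:ℕ) < N - 1 := by omega
      simp [uu, h1, h2]
    · by_cases h2 : (k:ℕ) < N - 1
      · simp [uu, h1, h2]
      · simp [uu, h1, h2]
        try ring
  rw [Finset.sum_congr rfl (fun k _ => hb k), Finset.sum_sub_distrib,
    count_lem N i (by omega)]
  have h2 : ∑ k : Fin N, (if (k:ℕ) < N - 1 then (((N:ℝ)-i)⁻¹) ^ 2
        else (((N:ℝ)-1-i)/((N:ℝ)-i)) ^ 2)
      = ∑ k : Fin N, (((((N:ℝ)-1-i)/((N:ℝ)-i)) ^ 2)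
          + (if (k:ℕ) < N - 1 then (((N:ℝ)-i)⁻¹) ^ 2 - (((N:ℝ)-1-i)/((N:ℝ)-i)) ^ 2 else 0)) := by
    apply Finset.sum_congr rfl
    intro k _
    by_cases h : (k:ℕ) < N - 1 <;> simp [h]
  rw [h2, Finset.sum_add_distrib, Finset.sum_const, count_lem N (N-1) (by omega),
    Nat.cast_sub (by omega : 1 ≤ N)]
  simp only [Finset.card_univ, Fintype.card_fin, nsmul_eq_mul]
  field_simp
  ring

lemma Wf_shift (N j : ℕ) (hN : 1 ≤ N) (μ : ℝ) (y : Fin N → ℝ) :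
    Wf N j (fun k => y k - μ) = Wf N j y := by
  have hN0 : (N : ℝ) ≠ 0 := by
    have : (1:ℝ) ≤ (N:ℝ) := by exact_mod_cast hN
    linarith
  have hsum : ∑ m : Fin N, (y m - μ) = (∑ m, y m) - N * μ := by
    rw [Finset.sum_sub_distrib, Finset.sum_const]
    simp only [Finset.card_univ, Fintype.card_fin, nsmul_eq_mul]
  unfold Wf
  apply Finset.sum_congr rfl
  intro k _
  by_cases h : (k:ℕ) < j
  · simp only [h, if_true, hsum]
    field_simp
    ring
  · simp [h]

lemma key_lin (N i : ℕ) (hN : 2 ≤ N) (hi : i + 1 ≤ N) (μ : ℝ) (y : Fin N → ℝ) :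
    ∑ k, uu N i k * (y k - μ) = Wf N (N-1) y - Wf N i y / ((N:ℝ) - i) := by
  have hN1 : (1:ℝ) ≤ (N : ℝ) - i := by
    have : (i : ℝ) + 1 ≤ (N : ℝ) := by exact_mod_cast hi
    linarith
  have hni : ((N : ℝ) - i) ≠ 0 := by linarith
  have hN0 : (N : ℝ) ≠ 0 := by
    have : (2:ℝ) ≤ (N:ℝ) := by exact_mod_cast hN
    linarith
  rw [show (∑ k, uu N i k * (y k - μ)) = ∑ k, uu N i k * (fun k => y k - μ) k from rfl]
  rw [sum_uu_mul N i hN hi]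
  rw [← Wf_shift N (N-1) (by omega) μ y, ← Wf_shift N i (by omega) μ y]
  rw [Wf_eq N (N-1) (by omega), Wf_eq N i (by omega), A_top N (by omega)]
  simp only [Nat.cast_sub (by omega : 1 ≤ N), Nat.cast_one]
  field_simp
  ring

lemma Wf_shift_w (N i j : ℕ) (hN : 2 ≤ N) (hi : i + 1 ≤ N) (hj : j ≤ i) (aa : ℝ)
    (y : Fin N → ℝ) :
    Wf N j (fun k => y k + aa * uu N i k) = Wf N j y := by
  have hsum : ∑ m : Fin N, (y m + aa * uu N i m) = ∑ m, y m := by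
    rw [Finset.sum_add_distrib, ← Finset.mul_sum, sum_uu N i hN hi, mul_zero, add_zero]
  unfold Wf
  apply Finset.sum_congr rfl
  intro k _
  by_cases h : (k:ℕ) < j
  · have hki : (k:ℕ) < i := lt_of_lt_of_le h hj
    have h0 : uu N i k = 0 := by simp [uu, hki]
    simp only [h, if_true, hsum, h0, mul_zero, add_zero]
  · simp [h]

noncomputable def DdF (N : ℕ) (σ a : ℝ) (y : Fin N → ℝ) : ℝ≥0∞ :=
  ENNReal.ofReal (Real.exp ((2*a/σ^2) * Wf N (N-1) y - 2*a^2/σ^2 * (1 - 1/(N:ℝ))))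

noncomputable def MiF (N : ℕ) (σ a : ℝ) (i : ℕ) (y : Fin N → ℝ) : ℝ≥0∞ :=
  ENNReal.ofReal (Real.exp ((2*a/σ^2) * Wf N i y / ((N:ℝ) - i)
    - 2*a^2/σ^2 * (1/((N:ℝ) - i) - 1/(N:ℝ))))

lemma measurable_DdF (N : ℕ) (σ a : ℝ) : Measurable (DdF N σ a) := by
  unfold DdF
  have := measurable_Wf N (N-1)
  fun_prop

lemma measurable_MiF (N : ℕ) (σ a : ℝ) (i : ℕ) : Measurable (MiF N σ a i) := by
  unfold MiF
  have := measurable_Wf N i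
  fun_prop

lemma tilt_MD (N : ℕ) (hN : 2 ≤ N) (σ μ a : ℝ) (hσ : 0 < σ) (i : ℕ) (hi : i + 1 ≤ N)
    (G : (Fin N → ℝ) → ℝ≥0∞) (hG : Measurable G)
    (hGinv : ∀ y : Fin N → ℝ, G (fun k => y k + 2 * a * uu N i k) = G y) :
    ∫⁻ y, G y * DdF N σ a y ∂(Measure.pi fun _ : Fin N => gaussianReal μ ⟨σ^2, sq_nonneg σ⟩)
      = ∫⁻ y, G y * MiF N σ a i y
          ∂(Measure.pi fun _ : Fin N => gaussianReal μ ⟨σ^2, sq_nonneg σ⟩) := by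
  have hσ2 : σ^2 ≠ 0 := pow_ne_zero 2 hσ.ne'
  have hv : (⟨σ^2, sq_nonneg σ⟩ : ℝ≥0) ≠ 0 := by
    intro h
    exact hσ2 (congrArg NNReal.toReal h)
  have hni1 : (1:ℝ) ≤ (N:ℝ) - i := by
    have : (i:ℝ)+1 ≤ (N:ℝ) := by exact_mod_cast hi
    linarith
  have hni : ((N:ℝ) - i) ≠ 0 := by linarith
  have hN0 : (N:ℝ) ≠ 0 := by
    have : (2:ℝ) ≤ (N:ℝ) := by exact_mod_cast hN
    linarith
  set w : Fin N → ℝ := fun k => 2 * a * uu N i k with hw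
  have hGM : Measurable fun y => G y * MiF N σ a i y := hG.mul (measurable_MiF N σ a i)
  have h2 := pi_tilt N μ ⟨σ^2, sq_nonneg σ⟩ hv w (fun y => G y * MiF N σ a i y) hGM
  have hA : ∀ y : Fin N → ℝ,
      (fun z => G z * MiF N σ a i z) y
        * ENNReal.ofReal (Real.exp (∑ k, (w k * (y k - μ) / ((⟨σ^2, sq_nonneg σ⟩ : ℝ≥0) : ℝ)
            - w k ^ 2 / (2 * ((⟨σ^2, sq_nonneg σ⟩ : ℝ≥0) : ℝ)))))
      = G y * DdF N σ a y := by
    intro y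
    have hvr : ((⟨σ^2, sq_nonneg σ⟩ : ℝ≥0) : ℝ) = σ^2 := rfl
    simp only [hvr]
    have hterm : ∀ k : Fin N, w k * (y k - μ) / σ^2 - w k^2/(2*σ^2)
        = (2*a/σ^2) * (uu N i k * (y k - μ)) - (2*a^2/σ^2) * (uu N i k)^2 := by
      intro k
      simp only [hw]
      field_simp
    have hsum : ∑ k, (w k * (y k - μ)/σ^2 - w k^2/(2*σ^2))
        = (2*a/σ^2) * (Wf N (N-1) y - Wf N i y/((N:ℝ)-i))
          - (2*a^2/σ^2) * (1 - ((N:ℝ)-i)⁻¹) := by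
      rw [Finset.sum_congr rfl (fun k _ => hterm k), Finset.sum_sub_distrib, ← Finset.mul_sum,
        ← Finset.mul_sum, key_lin N i hN hi μ y, sum_uu_sq N i hN hi]
    rw [hsum]
    simp only [MiF, DdF]
    rw [mul_assoc]
    congr 1
    rw [← ENNReal.ofReal_mul (Real.exp_nonneg _), ← Real.exp_add]
    congr 1
    congr 1
    field_simp
    ring
  have hB : ∀ y : Fin N → ℝ,
      (fun z => G z * MiF N σ a i z) (fun k => y k + w k) = G y * MiF N σ a i y := by
    intro y
    simp only [hw]
    rw [hGinv y]
    congr 1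
    simp only [MiF]
    rw [Wf_shift_w N i i hN hi le_rfl]
  calc ∫⁻ y, G y * DdF N σ a y ∂(Measure.pi fun _ : Fin N => gaussianReal μ ⟨σ^2, sq_nonneg σ⟩)
      = ∫⁻ y, (fun z => G z * MiF N σ a i z) y
          * ENNReal.ofReal (Real.exp (∑ k, (w k * (y k - μ) / ((⟨σ^2, sq_nonneg σ⟩ : ℝ≥0) : ℝ)
              - w k ^ 2 / (2 * ((⟨σ^2, sq_nonneg σ⟩ : ℝ≥0) : ℝ)))))
          ∂(Measure.pi fun _ : Fin N => gaussianReal μ ⟨σ^2, sq_nonneg σ⟩) :=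
        (lintegral_congr hA).symm
    _ = ∫⁻ y, (fun z => G z * MiF N σ a i z) (fun k => y k + w k)
          ∂(Measure.pi fun _ : Fin N => gaussianReal μ ⟨σ^2, sq_nonneg σ⟩) := h2
    _ = ∫⁻ y, G y * MiF N σ a i y
          ∂(Measure.pi fun _ : Fin N => gaussianReal μ ⟨σ^2, sq_nonneg σ⟩) :=
        lintegral_congr hB

lemma lint_D_one (N : ℕ) (hN : 2 ≤ N) (σ μ a : ℝ) (hσ : 0 < σ) :
    ∫⁻ y, DdF N σ a y ∂(Measure.pi fun _ : Fin N => gaussianReal μ ⟨σ^2, sq_nonneg σ⟩) = 1 := by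
  have h := tilt_MD N hN σ μ a hσ 0 (by omega) (fun _ => 1) measurable_const (fun _ => rfl)
  simp only [one_mul] at h
  rw [h]
  have h1 : ∀ y : Fin N → ℝ, MiF N σ a 0 y = 1 := by
    intro y
    simp only [MiF, Wf_zero]
    norm_num
  rw [lintegral_congr h1]
  rw [lintegral_const, one_mul]
  haveI : ∀ _ : Fin N, IsProbabilityMeasure (gaussianReal μ ⟨σ^2, sq_nonneg σ⟩) :=
    fun _ => instIsProbabilityMeasureGaussianReal μ ⟨σ^2, sq_nonneg σ⟩
  exact measure_univ

noncomputable def Ee (N : ℕ) (a : ℝ) (i : ℕ) : Set (Fin N → ℝ) :=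
  {y | a < Wf N i y ∧ ∀ j, j < i → Wf N j y ≤ a}

lemma measurableSet_Ee (N : ℕ) (a : ℝ) (i : ℕ) : MeasurableSet (Ee N a i) := by
  have h1 : MeasurableSet {y : Fin N → ℝ | a < Wf N i y} :=
    measurableSet_lt measurable_const (measurable_Wf N i)
  have h2 : ∀ j : ℕ, MeasurableSet {y : Fin N → ℝ | Wf N j y ≤ a} := fun j =>
    measurableSet_le (measurable_Wf N j) measurable_const
  have he : Ee N a i
      = {y : Fin N → ℝ | a < Wf N i y} ∩ ⋂ (j : ℕ) (_ : j < i), {y | Wf N j y ≤ a} := by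
    ext y
    simp [Ee, Set.mem_iInter]
  rw [he]
  exact h1.inter (MeasurableSet.iInter fun j => MeasurableSet.iInter fun _ => h2 j)


/-- for `Y₁,…,Y_N` i.i.d. `N(μ,σ²)` with sample mean `Ȳ` and discrete bridge
`Wᵢ = Σ_{k=1}^i (Y_k − Ȳ)` (`i = 1,…,N−1`), for every `c > 0`,
`ℙ(max_{1≤i≤N−1} Wᵢ > σ√N·c) ≤ exp(−2c²)`. -/
theorem discrete_bridge_one_sided_tail_bound
    (N : ℕ) (hN : 2 ≤ N) (σ μ : ℝ) (hσ : 0 < σ) (c : ℝ) (hc : 0 < c) :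
    (Measure.pi fun _ : Fin N => gaussianReal μ ⟨σ ^ 2, sq_nonneg σ⟩)
        {ω : Fin N → ℝ | ∃ i : ℕ, 1 ≤ i ∧ i ≤ N - 1 ∧
          σ * Real.sqrt N * c <
            ∑ k : Fin N, if (k : ℕ) < i then ω k - (∑ m, ω m) / (N : ℝ) else 0} ≤
      ENNReal.ofReal (Real.exp (-2 * c ^ 2)) := by
  classical
  have hσ2 : σ ^ 2 ≠ 0 := pow_ne_zero 2 hσ.ne'
  have hNR : (2:ℝ) ≤ (N:ℝ) := by exact_mod_cast hN
  have hN0 : (0:ℝ) < (N:ℝ) := by linarith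
  set P := Measure.pi fun _ : Fin N => gaussianReal μ ⟨σ ^ 2, sq_nonneg σ⟩ with hPdef
  set a : ℝ := σ * Real.sqrt N * c with hadef
  have hsq : Real.sqrt (N:ℝ) > 0 := Real.sqrt_pos.mpr hN0
  have ha : 0 < a := mul_pos (mul_pos hσ hsq) hc
  have ha2 : a^2 = σ^2 * (N:ℝ) * c^2 := by
    rw [hadef, mul_pow, mul_pow, Real.sq_sqrt hN0.le]
    try ring
  -- the event is contained in the disjoint union of first-hitting events
  have hsub : {ω : Fin N → ℝ | ∃ i : ℕ, 1 ≤ i ∧ i ≤ N - 1 ∧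
          a < ∑ k : Fin N, if (k : ℕ) < i then ω k - (∑ m, ω m) / (N : ℝ) else 0}
      ⊆ ⋃ i ∈ Finset.Icc 1 (N-1), Ee N a i := by
    intro y hy
    obtain ⟨i, hi1, hi2, hiy⟩ := hy
    have hiy' : a < Wf N i y := hiy
    have hex : ∃ j, a < Wf N j y := ⟨i, hiy'⟩
    have hp0 : a < Wf N (Nat.find hex) y := Nat.find_spec hex
    have hle : Nat.find hex ≤ i := Nat.find_min' hex hiy'
    have h1 : 1 ≤ Nat.find hex := by
      by_contra h
      push_neg at h
      have h0 : Nat.find hex = 0 := by omega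
      rw [h0, Wf_zero] at hp0
      linarith
    have hm : Nat.find hex ∈ Finset.Icc 1 (N-1) := Finset.mem_Icc.mpr ⟨h1, le_trans hle hi2⟩
    have hmem : y ∈ Ee N a (Nat.find hex) :=
      ⟨hp0, fun j hj => not_lt.mp (Nat.find_min hex hj)⟩
    exact Set.mem_biUnion hm hmem
  have hmulinv : ENNReal.ofReal (Real.exp (-2 * c ^ 2))
      * ENNReal.ofReal (Real.exp (2 * c ^ 2)) = 1 := by
    rw [← ENNReal.ofReal_mul (Real.exp_nonneg _), ← Real.exp_add]
    have : -2 * c ^ 2 + 2 * c ^ 2 = 0 := by ring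
    rw [this, Real.exp_zero, ENNReal.ofReal_one]
  -- the per-index bound
  have key : ∀ i ∈ Finset.Icc 1 (N-1),
      P (Ee N a i) ≤ ENNReal.ofReal (Real.exp (-2 * c ^ 2))
        * ∫⁻ y, (Ee N a i).indicator (fun _ => (1:ℝ≥0∞)) y * DdF N σ a y ∂P := by
    intro i hi
    obtain ⟨hi1, hi2⟩ := Finset.mem_Icc.mp hi
    have hiN : i + 1 ≤ N := by omega
    have hni1 : (1:ℝ) ≤ (N:ℝ) - i := by
      have : (i:ℝ) + 1 ≤ (N:ℝ) := by exact_mod_cast hiN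
      linarith
    have hni0 : (0:ℝ) < (N:ℝ) - i := by linarith
    have hni : ((N:ℝ) - i) ≠ 0 := by linarith
    have hGm : Measurable ((Ee N a i).indicator (fun _ => (1:ℝ≥0∞))) :=
      measurable_const.indicator (measurableSet_Ee N a i)
    have hGinv : ∀ y : Fin N → ℝ,
        (Ee N a i).indicator (fun _ => (1:ℝ≥0∞)) (fun k => y k + 2 * a * uu N i k)
          = (Ee N a i).indicator (fun _ => (1:ℝ≥0∞)) y := by
      intro y
      have hmem : ((fun k => y k + 2*a*uu N i k) ∈ Ee N a i) ↔ y ∈ Ee N a i := by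
        simp only [Ee, Set.mem_setOf_eq]
        rw [Wf_shift_w N i i hN hiN le_rfl]
        constructor
        · rintro ⟨hx1, hx2⟩
          refine ⟨hx1, fun j hj => ?_⟩
          have := hx2 j hj
          rwa [Wf_shift_w N i j hN hiN (le_of_lt hj)] at this
        · rintro ⟨hx1, hx2⟩
          refine ⟨hx1, fun j hj => ?_⟩
          rw [Wf_shift_w N i j hN hiN (le_of_lt hj)]
          exact hx2 j hj
      simp only [Set.indicator_apply]
      rw [if_congr hmem rfl rfl]
    -- lower bound for MiF on the event
    have hMi : ∀ y ∈ Ee N a i, ENNReal.ofReal (Real.exp (2 * c ^ 2)) ≤ MiF N σ a i y := by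
      intro y hy
      have hwa : a < Wf N i y := hy.1
      unfold MiF
      apply ENNReal.ofReal_le_ofReal
      apply Real.exp_le_exp.mpr
      have hL : 2*a/σ^2 * a / ((N:ℝ)-i) - 2*a^2/σ^2 * (1/((N:ℝ)-i) - 1/(N:ℝ))
          = 2*a^2/(σ^2*(N:ℝ)) := by
        field_simp
        ring
      have hR : 2*a^2/(σ^2*(N:ℝ)) = 2*c^2 := by
        rw [ha2]
        field_simp
      have hmono : 2*a/σ^2 * a / ((N:ℝ)-i) ≤ 2*a/σ^2 * Wf N i y / ((N:ℝ)-i) := by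
        have hlam : (0:ℝ) ≤ 2*a/σ^2 := by positivity
        gcongr
        try exact hwa.le
      linarith
    -- step 1 : Markov-type bound
    have step1 : ENNReal.ofReal (Real.exp (2 * c ^ 2)) * P (Ee N a i)
        ≤ ∫⁻ y, (Ee N a i).indicator (fun _ => (1:ℝ≥0∞)) y * MiF N σ a i y ∂P := by
      have hpt : ∀ y, (Ee N a i).indicator (fun _ => (1:ℝ≥0∞)) y * MiF N σ a i y
          = (Ee N a i).indicator (fun z => MiF N σ a i z) y := by
        intro y
        by_cases h : y ∈ Ee N a i <;> simp [Set.indicator_apply, h]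
      rw [lintegral_congr hpt, lintegral_indicator (measurableSet_Ee N a i)]
      rw [← setLIntegral_const (Ee N a i) (ENNReal.ofReal (Real.exp (2 * c ^ 2)))]
      exact setLIntegral_mono (measurable_MiF N σ a i) hMi
    -- step 2 : the tilt identity
    have step2 : ∫⁻ y, (Ee N a i).indicator (fun _ => (1:ℝ≥0∞)) y * DdF N σ a y ∂P
        = ∫⁻ y, (Ee N a i).indicator (fun _ => (1:ℝ≥0∞)) y * MiF N σ a i y ∂P :=
      tilt_MD N hN σ μ a hσ i hiN _ hGm hGinv
    calc P (Ee N a i)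
        = ENNReal.ofReal (Real.exp (-2 * c ^ 2))
            * (ENNReal.ofReal (Real.exp (2 * c ^ 2)) * P (Ee N a i)) := by
          rw [← mul_assoc, hmulinv, one_mul]
      _ ≤ ENNReal.ofReal (Real.exp (-2 * c ^ 2))
            * ∫⁻ y, (Ee N a i).indicator (fun _ => (1:ℝ≥0∞)) y * MiF N σ a i y ∂P :=
          mul_le_mul_right step1 _
      _ = ENNReal.ofReal (Real.exp (-2 * c ^ 2))
            * ∫⁻ y, (Ee N a i).indicator (fun _ => (1:ℝ≥0∞)) y * DdF N σ a y ∂P := by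
          rw [step2]
  -- assemble
  calc P {ω : Fin N → ℝ | ∃ i : ℕ, 1 ≤ i ∧ i ≤ N - 1 ∧
          a < ∑ k : Fin N, if (k : ℕ) < i then ω k - (∑ m, ω m) / (N : ℝ) else 0}
      ≤ P (⋃ i ∈ Finset.Icc 1 (N-1), Ee N a i) := measure_mono hsub
    _ ≤ ∑ i ∈ Finset.Icc 1 (N-1), P (Ee N a i) := measure_biUnion_finset_le _ _
    _ ≤ ∑ i ∈ Finset.Icc 1 (N-1), ENNReal.ofReal (Real.exp (-2 * c ^ 2))
          * ∫⁻ y, (Ee N a i).indicator (fun _ => (1:ℝ≥0∞)) y * DdF N σ a y ∂P :=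
        Finset.sum_le_sum key
    _ = ENNReal.ofReal (Real.exp (-2 * c ^ 2))
          * ∑ i ∈ Finset.Icc 1 (N-1), ∫⁻ y,
              (Ee N a i).indicator (fun _ => (1:ℝ≥0∞)) y * DdF N σ a y ∂P := by
        rw [Finset.mul_sum]
    _ = ENNReal.ofReal (Real.exp (-2 * c ^ 2))
          * ∫⁻ y, ∑ i ∈ Finset.Icc 1 (N-1),
              (Ee N a i).indicator (fun _ => (1:ℝ≥0∞)) y * DdF N σ a y ∂P := by
        rw [lintegral_finset_sum _ (f := fun i y => (Ee N a i).indicator (fun _ => (1:ℝ≥0∞)) y * DdF N σ a y) (fun i _ =>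
          ((measurable_const.indicator (measurableSet_Ee N a i)).mul (measurable_DdF N σ a) :
            Measurable (fun y => (Ee N a i).indicator (fun _ => (1:ℝ≥0∞)) y * DdF N σ a y)))]
    _ ≤ ENNReal.ofReal (Real.exp (-2 * c ^ 2)) * ∫⁻ y, DdF N σ a y ∂P := by
        apply mul_le_mul_right
        apply lintegral_mono
        intro y
        dsimp only
        rw [← Finset.sum_mul]
        have hsum1 : ∑ i ∈ Finset.Icc 1 (N-1),
            (Ee N a i).indicator (fun _ => (1:ℝ≥0∞)) y ≤ 1 := by
          by_cases hex : ∃ i ∈ Finset.Icc 1 (N-1), y ∈ Ee N a i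
          · obtain ⟨i0, hi0s, hi0y⟩ := hex
            rw [Finset.sum_eq_single_of_mem i0 hi0s ?_]
            · simp [Set.indicator_of_mem hi0y]
            · intro b hb hbne
              have hbny : y ∉ Ee N a b := by
                intro hby
                rcases lt_or_gt_of_ne hbne with h | h
                · exact absurd hby.1 (not_lt.mpr (hi0y.2 b h))
                · exact absurd hi0y.1 (not_lt.mpr (hby.2 i0 h))
              simp [Set.indicator_of_notMem hbny]
          · push_neg at hex
            rw [Finset.sum_eq_zero (fun i hi => by
              simp [Set.indicator_of_notMem (hex i hi)])]
            exact zero_le_one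
        calc (∑ i ∈ Finset.Icc 1 (N-1), (Ee N a i).indicator (fun _ => (1:ℝ≥0∞)) y)
              * DdF N σ a y
            ≤ 1 * DdF N σ a y := mul_le_mul_left hsum1 _
          _ = DdF N σ a y := one_mul _
    _ = ENNReal.ofReal (Real.exp (-2 * c ^ 2)) * 1 := by
        rw [hPdef, lint_D_one N hN σ μ a hσ]
    _ = ENNReal.ofReal (Real.exp (-2 * c ^ 2)) := mul_one _
end

section
/- (Property 1.) Let B be a real P×M matrix with B𝟙 = 0 and with the mean-zero subspace {v : Σ_i v_i = 0} contained in the range of Bᵀ. Let Y = μ𝟙 + ε with ε having i.i.d. N(0,σ²) coordinates (σ > 0), let Ȳ be the sample mean, and let Λ(Y) = min{‖w‖_∞ : Bᵀw = Y − Ȳ𝟙}. Then for every λ ≥ 0 the event {f̂_λ(Y) = Ȳ𝟙} coincides with the event {Λ(Y) ≤ λ}; consequently, if λ_M satisfies ℙ(Λ(Y) ≤ λ_M) = 1 − α, then ℙ( f̂_{λ_M}(Y) = Ȳ𝟙 ) = 1 − α. -/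
open Matrix MeasureTheory ProbabilityTheory

/-- Exchange of summation: `⟨Bᵀw, h⟩ = ⟨w, Bh⟩`. -/
lemma tv_swap_sum {P M : ℕ} (B : Matrix (Fin P) (Fin M) ℝ) (w : Fin P → ℝ) (h : Fin M → ℝ) :
    ∑ i, (B.transpose.mulVec w) i * h i = ∑ j, w j * (B.mulVec h j) := by
  simp only [Matrix.mulVec, dotProduct, Matrix.transpose_apply, Finset.sum_mul,
    Finset.mul_sum]
  rw [Finset.sum_comm]
  exact Finset.sum_congr rfl fun j _ => Finset.sum_congr rfl fun i _ => by ring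

/-- Minimality of the constant fit is equivalent to the first-order (dual) condition
`⟨y − ȳ𝟙, h⟩ ≤ λ‖Bh‖₁` for every direction `h`. -/
lemma tv_min_iff_dual {P M : ℕ} (B : Matrix (Fin P) (Fin M) ℝ) (lam : ℝ)
    (y : Fin M → ℝ) (ybar : ℝ) (hBy : B.mulVec (fun _ => ybar) = 0) :
    (∀ f, tvF B lam y (fun _ => ybar) ≤ tvF B lam y f) ↔
      (∀ h : Fin M → ℝ, ∑ i, (y i - ybar) * h i ≤ lam * ∑ j, |B.mulVec h j|) := by
  have hconst : ∑ j, |B.mulVec (fun _ : Fin M => ybar) j| = 0 := by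
    rw [hBy]; simp
  constructor
  · intro hmin h
    apply le_of_forall_pos_le_add
    intro ε hε
    set S := ∑ i, h i ^ 2 with hSdef
    have hS : 0 ≤ S := Finset.sum_nonneg fun i _ => sq_nonneg _
    set t : ℝ := ε / (S / 2 + 1) with htdef
    have hden : 0 < S / 2 + 1 := by linarith
    have ht : 0 < t := div_pos hε hden
    have htS : t * (S / 2) ≤ ε := by
      have h1 : t * (S / 2 + 1) = ε := div_mul_cancel₀ ε (ne_of_gt hden)
      nlinarith
    have hBf : B.mulVec (fun i => ybar + t * h i) = t • B.mulVec h := by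
      have hf : (fun i => ybar + t * h i) = (fun _ : Fin M => ybar) + t • h := by
        funext i; simp [Pi.smul_apply, smul_eq_mul]
      rw [hf, Matrix.mulVec_add, Matrix.mulVec_smul, hBy, zero_add]
    have key := hmin (fun i => ybar + t * h i)
    simp only [tvF, hBf, hconst] at key
    have e1 : ∑ j, |(t • B.mulVec h) j| = t * ∑ j, |B.mulVec h j| := by
      simp [Pi.smul_apply, smul_eq_mul, abs_mul, abs_of_pos ht, Finset.mul_sum]
    have e2 : ∑ i, (y i - (ybar + t * h i)) ^ 2
        = ∑ i, (y i - ybar) ^ 2 - 2 * t * ∑ i, (y i - ybar) * h i + t ^ 2 * S := by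
      have e : ∀ i, (y i - (ybar + t * h i)) ^ 2
          = (y i - ybar) ^ 2 - 2 * t * ((y i - ybar) * h i) + t ^ 2 * h i ^ 2 := by
        intro i; ring
      simp_rw [e, Finset.sum_add_distrib, Finset.sum_sub_distrib, ← Finset.mul_sum]
      rw [hSdef]
    rw [e1, e2] at key
    have hL : 0 ≤ ∑ j, |B.mulVec h j| := Finset.sum_nonneg fun j _ => abs_nonneg _
    have hdiv : t * (∑ i, (y i - ybar) * h i) ≤ t * (lam * ∑ j, |B.mulVec h j| + t * (S / 2)) := by
      nlinarith
    have := (mul_le_mul_iff_right₀ ht).mp hdiv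
    linarith
  · intro hdual f
    have hf : f = (fun i => f i - ybar) + (fun _ : Fin M => ybar) := by
      funext i; simp
    have hBf : B.mulVec f = B.mulVec (fun i => f i - ybar) := by
      conv_lhs => rw [hf]
      rw [Matrix.mulVec_add, hBy, add_zero]
    simp only [tvF, hBf, hconst, mul_zero, add_zero]
    have e : ∀ i, (y i - f i) ^ 2
        = (y i - ybar) ^ 2 - 2 * ((y i - ybar) * (f i - ybar)) + (f i - ybar) ^ 2 := by
      intro i; ring
    simp_rw [e, Finset.sum_add_distrib, Finset.sum_sub_distrib, ← Finset.mul_sum]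
    have h1 := hdual (fun i => f i - ybar)
    have h2 : 0 ≤ ∑ i, (f i - ybar) ^ 2 := Finset.sum_nonneg fun i _ => sq_nonneg _
    linarith

/-- Duality: the first-order condition is equivalent to `Λ(y) ≤ λ`. -/
lemma tv_dual_iff_lam {P M : ℕ} (B : Matrix (Fin P) (Fin M) ℝ) (lam : ℝ) (hlam : 0 ≤ lam)
    (y : Fin M → ℝ)
    (hne : ∃ w : Fin P → ℝ, B.transpose.mulVec w = fun i => y i - (∑ k, y k) / (M : ℝ)) :
    (∀ h : Fin M → ℝ,
        ∑ i, (y i - (∑ k, y k) / (M : ℝ)) * h i ≤ lam * ∑ j, |B.mulVec h j|) ↔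
      tvLam B y ≤ lam := by
  set c : Fin M → ℝ := fun i => y i - (∑ k, y k) / (M : ℝ) with hc
  set Sset : Set ℝ := (fun w : Fin P → ℝ => ‖w‖) ''
    {w : Fin P → ℝ | B.transpose.mulVec w = c} with hSset
  have hSne : Sset.Nonempty := by
    obtain ⟨w, hw⟩ := hne
    exact ⟨‖w‖, w, hw, rfl⟩
  have hSbdd : BddBelow Sset := ⟨0, by rintro a ⟨w, _, rfl⟩; exact norm_nonneg w⟩
  constructor
  · -- dual condition → Λ ≤ lam, via separation
    intro hdual
    set K : Set (Fin M → ℝ) := B.transpose.mulVec '' Metric.closedBall 0 lam with hK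
    have hfun : ⇑B.transpose.mulVecLin = B.transpose.mulVec :=
      funext fun v => Matrix.mulVecLin_apply _ _
    have hKconv : Convex ℝ K := by
      have := (convex_closedBall (0 : Fin P → ℝ) lam).linear_image B.transpose.mulVecLin
      rwa [hfun] at this
    have hKcl : IsClosed K := by
      have hcont : Continuous B.transpose.mulVec := by
        have := LinearMap.continuous_of_finiteDimensional B.transpose.mulVecLin
        rwa [hfun] at this
      exact ((isCompact_closedBall (0 : Fin P → ℝ) lam).image hcont).isClosed
    have hcK : c ∈ K := by
      by_contra hcnot
      obtain ⟨g, u, hgu, hug⟩ := geometric_hahn_banach_closed_point hKconv hKcl hcnot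
      set h : Fin M → ℝ := fun i => g (fun j => if i = j then (1 : ℝ) else 0) with hh
      have hg : ∀ x : Fin M → ℝ, g x = ∑ i, x i * h i := by
        intro x
        have := LinearMap.pi_apply_eq_sum_univ (g : (Fin M → ℝ) →ₗ[ℝ] ℝ) x
        simpa [hh, smul_eq_mul] using this
      set w : Fin P → ℝ := fun j => lam * (if 0 ≤ B.mulVec h j then 1 else -1) with hw
      have hwball : w ∈ Metric.closedBall (0 : Fin P → ℝ) lam := by
        rw [mem_closedBall_zero_iff]
        rw [pi_norm_le_iff_of_nonneg hlam]
        intro j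
        rw [Real.norm_eq_abs, hw]
        by_cases hj : 0 ≤ B.mulVec h j <;> simp [hj, abs_mul, abs_of_nonneg hlam]
      have h1 : g (B.transpose.mulVec w) < u := hgu _ ⟨w, hwball, rfl⟩
      have h2 : g (B.transpose.mulVec w) = lam * ∑ j, |B.mulVec h j| := by
        rw [hg, tv_swap_sum B w h, Finset.mul_sum]
        refine Finset.sum_congr rfl fun j _ => ?_
        by_cases hj : 0 ≤ B.mulVec h j
        · simp only [hw, if_pos hj, abs_of_nonneg hj]; ring
        · simp only [hw, if_neg hj, abs_of_neg (lt_of_not_ge hj)]; ring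
      have h3 : g c = ∑ i, c i * h i := hg c
      have h4 := hdual h
      rw [h3] at hug
      rw [h2] at h1
      linarith
    obtain ⟨w, hwball, hwc⟩ := hcK
    calc tvLam B y ≤ ‖w‖ := csInf_le hSbdd ⟨w, hwc, rfl⟩
      _ ≤ lam := mem_closedBall_zero_iff.mp hwball
  · -- Λ ≤ lam → dual condition
    intro hΛ h
    set L : ℝ := ∑ j, |B.mulVec h j| with hL
    have hL0 : 0 ≤ L := Finset.sum_nonneg fun j _ => abs_nonneg _
    apply le_of_forall_pos_le_add
    intro ε hε
    have hden : 0 < L + 1 := by linarith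
    have hε' : 0 < ε / (L + 1) := div_pos hε hden
    obtain ⟨a, ⟨w, hwfeas, rfl⟩, haw⟩ := Real.lt_sInf_add_pos hSne hε'
    have hwle : ‖w‖ ≤ lam + ε / (L + 1) := le_of_lt (lt_of_lt_of_le haw (by
      have : tvLam B y ≤ lam := hΛ
      unfold tvLam at this
      linarith))
    have step1 : ∑ i, (y i - (∑ k, y k) / (M : ℝ)) * h i = ∑ j, w j * B.mulVec h j := by
      rw [← tv_swap_sum B w h, hwfeas]
    have step2 : ∑ j, w j * B.mulVec h j ≤ ‖w‖ * L := by
      rw [hL, Finset.mul_sum]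
      refine Finset.sum_le_sum fun j _ => ?_
      calc w j * B.mulVec h j ≤ |w j * B.mulVec h j| := le_abs_self _
        _ = |w j| * |B.mulVec h j| := abs_mul _ _
        _ ≤ ‖w‖ * |B.mulVec h j| := by
            have := norm_le_pi_norm w j
            rw [Real.norm_eq_abs] at this
            exact mul_le_mul_of_nonneg_right this (abs_nonneg _)
    have step3 : ‖w‖ * L ≤ lam * L + ε := by
      have h1 : ‖w‖ * L ≤ (lam + ε / (L + 1)) * L :=
        mul_le_mul_of_nonneg_right hwle hL0
      have h2 : (ε / (L + 1)) * L ≤ ε := by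
        rw [div_mul_eq_mul_div, div_le_iff₀ hden]
        nlinarith
      nlinarith
    linarith [step1, step2, step3]

/-- Property 1: for `Y = μ𝟙 + ε` with i.i.d. `N(0,σ²)` noise, the event
`{f̂_λ(Y) = Ȳ𝟙}` coincides with `{Λ(Y) ≤ λ}` for every `λ ≥ 0`; consequently, if
`ℙ(Λ(Y) ≤ λ_M) = 1 − α` then `ℙ(f̂_{λ_M}(Y) = Ȳ𝟙) = 1 − α`. -/
theorem tv_constant_fit_event_eq_lam_event
    (M P : ℕ) (hM : 1 ≤ M) (B : Matrix (Fin P) (Fin M) ℝ)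
    (hB1 : B.mulVec (fun _ => (1 : ℝ)) = 0)
    (hrange : {v : Fin M → ℝ | ∑ i, v i = 0} ⊆ Set.range B.transpose.mulVec)
    (σ μ : ℝ) (hσ : 0 < σ) :
    (∀ lam : ℝ, 0 ≤ lam →
      {ω : Fin M → ℝ | ∀ f : Fin M → ℝ,
          tvF B lam ω (fun _ => (∑ k, ω k) / (M : ℝ)) ≤ tvF B lam ω f} =
        {ω : Fin M → ℝ | tvLam B ω ≤ lam}) ∧
    ∀ lamM α : ℝ, 0 ≤ lamM →
      (Measure.pi fun _ : Fin M => gaussianReal μ ⟨σ ^ 2, sq_nonneg σ⟩)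
          {ω : Fin M → ℝ | tvLam B ω ≤ lamM} = ENNReal.ofReal (1 - α) →
      (Measure.pi fun _ : Fin M => gaussianReal μ ⟨σ ^ 2, sq_nonneg σ⟩)
          {ω : Fin M → ℝ | ∀ f : Fin M → ℝ,
            tvF B lamM ω (fun _ => (∑ k, ω k) / (M : ℝ)) ≤ tvF B lamM ω f} =
        ENNReal.ofReal (1 - α) := by
  have hMne : (M : ℝ) ≠ 0 := Nat.cast_ne_zero.mpr (by omega)
  have hmain : ∀ lam : ℝ, 0 ≤ lam →
      {ω : Fin M → ℝ | ∀ f : Fin M → ℝ,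
          tvF B lam ω (fun _ => (∑ k, ω k) / (M : ℝ)) ≤ tvF B lam ω f} =
        {ω : Fin M → ℝ | tvLam B ω ≤ lam} := by
    intro lam hlam
    ext ω
    simp only [Set.mem_setOf_eq]
    have hBy : B.mulVec (fun _ : Fin M => (∑ k, ω k) / (M : ℝ)) = 0 := by
      have hconst : (fun _ : Fin M => (∑ k, ω k) / (M : ℝ))
          = ((∑ k, ω k) / (M : ℝ)) • (fun _ : Fin M => (1 : ℝ)) := by
        funext i; simp
      rw [hconst, Matrix.mulVec_smul, hB1, smul_zero]
    have hc0 : ∑ i, (ω i - (∑ k, ω k) / (M : ℝ)) = 0 := by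
      rw [Finset.sum_sub_distrib, Finset.sum_const, Finset.card_univ, Fintype.card_fin,
        nsmul_eq_mul]
      field_simp
      ring
    have hne : ∃ w : Fin P → ℝ,
        B.transpose.mulVec w = fun i => ω i - (∑ k, ω k) / (M : ℝ) := by
      have hmem : (fun i => ω i - (∑ k, ω k) / (M : ℝ)) ∈ Set.range B.transpose.mulVec :=
        hrange hc0
      exact Set.mem_range.mp hmem
    exact (tv_min_iff_dual B lam ω ((∑ k, ω k) / (M : ℝ)) hBy).trans
      (tv_dual_iff_lam B lam hlam ω hne)
  refine ⟨hmain, fun lamM α hlam hmeas => ?_⟩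
  rw [hmain lamM hlam]
  exact hmeas
end

section
/- (Theorem 3.1, KKT conditions for exact segmentation.) Let N ≥ 2, y ∈ ℝ^N, λ > 0, let B be the (N−1)×N finite-difference matrix, and fix jump locations 0 = N_{•0} < N_{•1} < … < N_{•L} = N with piece sizes N_l = N_{•l} − N_{•(l−1)} and signs s₁,…,s_{L−1} ∈ {−1,+1}, with the convention s₀ = s_L = 0. Let ȳ_l be the mean of y over the l-th piece {N_{•(l−1)}+1,…,N_{•l}}. Then the TV estimate f̂_λ(y) is constant on each piece l with value ĥ_l and satisfies sign(ĥ_{l+1} − ĥ_l) = s_l for l = 1,…,L−1, if and only if the following hold: (i) ĥ_l = ȳ_l + (s_l − s_{l−1})·λ/N_l for l = 1,…,L; (ii) sign(ĥ_{l+1} − ĥ_l) = s_l for l = 1,…,L−1; and (iii) the dual variables w defined by w_{N_{•(l−1)}+i} = −Σ_{k=1}^i y_{N_{•(l−1)}+k} + i·ĥ_l + λ·s_{l−1}, for i = 1,…,N_l and l = 1,…,L (restricted to indices 1,…,N−1), all lie in the interval [−λ, λ]. -/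
open Matrix

/-- The `(N−1)×N` finite-difference matrix of dimension one:
row `i` has `+1` in column `i` and `−1` in column `i+1`. -/
def oneDiff (N : ℕ) : Matrix (Fin (N - 1)) (Fin N) ℝ :=
  fun i j => if (j : ℕ) = (i : ℕ) then 1 else if (j : ℕ) = (i : ℕ) + 1 then -1 else 0

/-- The mean `ȳ_l` of `y` over the `l`-th piece `{N_{•(l−1)}+1,…,N_{•l}}` (1-based),
i.e. over 0-based indices `j` with `Nb (l−1) ≤ j < Nb l`. -/
noncomputable def pieceMean {N : ℕ} (y : Fin N → ℝ) (Nb : ℕ → ℕ) (l : ℕ) : ℝ :=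
  (∑ j : Fin N, if Nb (l - 1) ≤ (j : ℕ) ∧ (j : ℕ) < Nb l then y j else 0) /
    ((Nb l - Nb (l - 1) : ℕ) : ℝ)

/-- The partial sum `Σ_{k=1}^i y_{N_{•(l−1)}+k}` within the `l`-th piece. -/
noncomputable def piecePartialSum {N : ℕ} (y : Fin N → ℝ) (Nb : ℕ → ℕ) (l i : ℕ) : ℝ :=
  ∑ j : Fin N, if Nb (l - 1) ≤ (j : ℕ) ∧ (j : ℕ) < Nb (l - 1) + i then y j else 0

/-- If `a t² + c t + b |t| ≥ 0` for all small `t`, then `|c| ≤ b`. -/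
lemma key_small (a b c ε : ℝ) (ha : 0 ≤ a) (hε : 0 < ε)
    (h : ∀ t : ℝ, |t| < ε → 0 ≤ a * t ^ 2 + c * t + b * |t|) : |c| ≤ b := by
  by_contra hc
  push_neg at hc
  set δ : ℝ := min (ε / 2) ((|c| - b) / (2 * (a + 1))) with hδdef
  have hδpos : 0 < δ := by
    apply lt_min (by linarith)
    apply div_pos (by linarith) (by linarith)
  have hδε : δ < ε := lt_of_le_of_lt (min_le_left _ _) (by linarith)
  have haδ : a * δ < |c| - b := by
    have h1 : δ ≤ (|c| - b) / (2 * (a + 1)) := min_le_right _ _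
    have h2 : a * δ ≤ a * ((|c| - b) / (2 * (a + 1))) := by
      apply mul_le_mul_of_nonneg_left h1 ha
    have h3 : a * ((|c| - b) / (2 * (a + 1))) < |c| - b := by
      rw [← mul_div_assoc, div_lt_iff₀ (by linarith : (0:ℝ) < 2 * (a + 1))]
      nlinarith
    linarith
  -- choose t with sign opposite to c
  set t : ℝ := if 0 ≤ c then -δ else δ with htdef
  have hts : |t| = δ := by
    rcases le_or_gt 0 c with h0 | h0
    · rw [htdef, if_pos h0, abs_neg, abs_of_pos hδpos]
    · rw [htdef, if_neg (not_le.2 h0), abs_of_pos hδpos]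
  have hct : c * t = -(|c| * δ) := by
    rcases le_or_gt 0 c with h0 | h0
    · rw [htdef, if_pos h0, abs_of_nonneg h0]; ring
    · rw [htdef, if_neg (not_le.2 h0), abs_of_neg h0]; ring
  have := h t (by rw [hts]; exact hδε)
  rw [hct, hts] at this
  have ht2 : t ^ 2 = δ ^ 2 := by
    rcases le_or_gt 0 c with h0 | h0
    · rw [htdef, if_pos h0]; ring
    · rw [htdef, if_neg (not_le.2 h0)]
  rw [ht2] at this
  nlinarith

/-- Split a windowed sum over `Fin N`. -/
lemma sum_fin_ite_split {N : ℕ} (g : Fin N → ℝ) (a b c : ℕ) (hab : a ≤ b) (hbc : b ≤ c) :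
    (∑ j : Fin N, if a ≤ (j : ℕ) ∧ (j : ℕ) < c then g j else 0)
      = (∑ j : Fin N, if a ≤ (j : ℕ) ∧ (j : ℕ) < b then g j else 0)
        + (∑ j : Fin N, if b ≤ (j : ℕ) ∧ (j : ℕ) < c then g j else 0) := by
  rw [← Finset.sum_add_distrib]
  apply Finset.sum_congr rfl
  intro j _
  rcases Nat.lt_or_ge (j : ℕ) b with hj | hj
  · rw [if_neg (by omega : ¬(b ≤ (j : ℕ) ∧ (j : ℕ) < c)), add_zero]
    by_cases h : a ≤ (j : ℕ) ∧ (j : ℕ) < b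
    · rw [if_pos h, if_pos (by omega : a ≤ (j : ℕ) ∧ (j : ℕ) < c)]
    · rw [if_neg h, if_neg (by omega : ¬(a ≤ (j : ℕ) ∧ (j : ℕ) < c))]
  · rw [if_neg (by omega : ¬(a ≤ (j : ℕ) ∧ (j : ℕ) < b)), zero_add]
    by_cases h : b ≤ (j : ℕ) ∧ (j : ℕ) < c
    · rw [if_pos h, if_pos (by omega : a ≤ (j : ℕ) ∧ (j : ℕ) < c)]
    · rw [if_neg h, if_neg (by omega : ¬(a ≤ (j : ℕ) ∧ (j : ℕ) < c))]

/-- A windowed sum of a constant. -/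
lemma sum_fin_const {N : ℕ} (c : ℝ) (a b : ℕ) (hab : a ≤ b) (hbN : b ≤ N) :
    (∑ j : Fin N, if a ≤ (j : ℕ) ∧ (j : ℕ) < b then c else 0) = ((b - a : ℕ) : ℝ) * c := by
  rw [Fin.sum_univ_eq_sum_range (fun n => if a ≤ n ∧ n < b then c else 0) N]
  rw [Finset.sum_ite, Finset.sum_const, Finset.sum_const]
  have hfilter : (Finset.range N).filter (fun n => a ≤ n ∧ n < b) = Finset.Ico a b := by
    ext n; simp [Finset.mem_Ico, Finset.mem_range]; omega
  rw [hfilter, Nat.card_Ico]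
  simp [nsmul_eq_mul]

/-- A width-one window. -/
lemma sum_fin_window_one {N : ℕ} (g : Fin N → ℝ) (a : ℕ) (haN : a < N) :
    (∑ j : Fin N, if a ≤ (j : ℕ) ∧ (j : ℕ) < a + 1 then g j else 0) = g ⟨a, haN⟩ := by
  have : ∀ j : Fin N, (if a ≤ (j : ℕ) ∧ (j : ℕ) < a + 1 then g j else 0)
      = if j = ⟨a, haN⟩ then g j else 0 := by
    intro j
    congr 1
    simp only [eq_iff_iff, Fin.ext_iff]
    omega
  rw [Finset.sum_congr rfl (fun j _ => this j), Finset.sum_ite_eq' Finset.univ _ g]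
  simp

/-- Sum of a single-row indicator over `Fin P`. -/
lemma sum_fin_single {P : ℕ} (c : ℝ) (m : ℕ) :
    (∑ j : Fin P, if (j : ℕ) + 1 = m then c else 0) = if 1 ≤ m ∧ m ≤ P then c else 0 := by
  by_cases h : 1 ≤ m ∧ m ≤ P
  · obtain ⟨h1, h2⟩ := h
    have hm : m - 1 < P := by omega
    have : ∀ j : Fin P, (if (j : ℕ) + 1 = m then c else 0)
        = if j = ⟨m - 1, hm⟩ then c else 0 := by
      intro j
      congr 1
      simp only [eq_iff_iff, Fin.ext_iff]
      omega
    rw [Finset.sum_congr rfl (fun j _ => this j),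
      Finset.sum_ite_eq' Finset.univ _ (fun _ => c)]
    simp only [Finset.mem_univ, if_true]
    exact (if_pos ⟨h1, h2⟩).symm
  · rw [if_neg h]
    apply Finset.sum_eq_zero
    intro j _
    rw [if_neg]
    have := j.isLt
    omega

lemma oneDiff_mulVec {N : ℕ} (f : Fin N → ℝ) (i : Fin (N - 1)) :
    (oneDiff N).mulVec f i
      = f ⟨(i : ℕ), by omega⟩ - f ⟨(i : ℕ) + 1, by omega⟩ := by
  have hi := i.isLt
  unfold Matrix.mulVec oneDiff dotProduct
  have key : ∀ j : Fin N,
      (if (j : ℕ) = (i : ℕ) then (1:ℝ) else if (j : ℕ) = (i : ℕ) + 1 then -1 else 0) * f j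
      = (if j = ⟨(i : ℕ), by omega⟩ then f j else 0)
        + (if j = ⟨(i : ℕ) + 1, by omega⟩ then -f j else 0) := by
    intro j
    by_cases h1 : (j : ℕ) = (i : ℕ)
    · have e1 : j = ⟨(i : ℕ), by omega⟩ := Fin.ext h1
      have n2 : ¬ (j = ⟨(i : ℕ) + 1, by omega⟩) := by simp only [Fin.ext_iff]; omega
      rw [if_pos h1, if_pos e1, if_neg n2]; ring
    · by_cases h2 : (j : ℕ) = (i : ℕ) + 1
      · have e2 : j = ⟨(i : ℕ) + 1, by omega⟩ := Fin.ext h2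
        have n1 : ¬ (j = ⟨(i : ℕ), by omega⟩) := by simp only [Fin.ext_iff]; omega
        rw [if_neg h1, if_pos h2, if_pos e2, if_neg n1]; ring
      · have n1 : ¬ (j = ⟨(i : ℕ), by omega⟩) := by simp only [Fin.ext_iff]; omega
        have n2 : ¬ (j = ⟨(i : ℕ) + 1, by omega⟩) := by simp only [Fin.ext_iff]; omega
        rw [if_neg h1, if_neg h2, if_neg n1, if_neg n2]; ring
  rw [Finset.sum_congr rfl (fun j _ => key j), Finset.sum_add_distrib,
    Finset.sum_ite_eq' Finset.univ _ f, Finset.sum_ite_eq' Finset.univ _ (fun j => -f j)]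
  simp
  ring

/-- Quadratic expansion of the TV objective around `g`. -/
lemma tvF_expand {P M : ℕ} (B : Matrix (Fin P) (Fin M) ℝ) (lam : ℝ) (y f g : Fin M → ℝ) :
    tvF B lam y f = tvF B lam y g
      + (1 / 2) * ∑ i, (f i - g i) ^ 2 + ∑ i, (g i - y i) * (f i - g i)
      + lam * (∑ j, |B.mulVec f j| - ∑ j, |B.mulVec g j|) := by
  unfold tvF
  have key : ∀ i, (y i - f i) ^ 2
      = (y i - g i) ^ 2 + ((f i - g i) ^ 2 + 2 * ((g i - y i) * (f i - g i))) := by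
    intro i; ring
  rw [Finset.sum_congr rfl (fun i (_ : i ∈ Finset.univ) => key i),
    Finset.sum_add_distrib, Finset.sum_add_distrib, ← Finset.mul_sum]
  ring

/-- Sufficient condition for global minimality (KKT). -/
lemma tvF_min_of_dual {P M : ℕ} (B : Matrix (Fin P) (Fin M) ℝ) (lam : ℝ)
    (y g : Fin M → ℝ) (v : Fin P → ℝ)
    (hv1 : ∀ j, |v j| ≤ lam)
    (hv2 : ∀ j, v j * B.mulVec g j = lam * |B.mulVec g j|)
    (hv3 : ∀ k, g k - y k = -∑ j, B j k * v j) :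
    ∀ f, tvF B lam y g ≤ tvF B lam y f := by
  intro f
  rw [tvF_expand B lam y f g]
  have hmv : ∀ (x : Fin M → ℝ) (j : Fin P), B.mulVec x j = ∑ i, B j i * x i := by
    intro x j; rfl
  have hlin : ∑ i, (g i - y i) * (f i - g i)
      = -∑ j, v j * B.mulVec f j + lam * ∑ j, |B.mulVec g j| := by
    have h1 : ∑ i, (g i - y i) * (f i - g i)
        = ∑ i, ∑ j, -(B j i * v j * (f i - g i)) := by
      apply Finset.sum_congr rfl
      intro i _
      rw [hv3 i, neg_mul, Finset.sum_mul, ← Finset.sum_neg_distrib]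
    rw [h1, Finset.sum_comm]
    have h2 : ∀ j : Fin P, ∑ i, -(B j i * v j * (f i - g i))
        = -(v j * B.mulVec f j) + v j * B.mulVec g j := by
      intro j
      rw [hmv f j, hmv g j, Finset.mul_sum, Finset.mul_sum, ← Finset.sum_neg_distrib,
        ← Finset.sum_add_distrib]
      apply Finset.sum_congr rfl
      intro i _
      ring
    rw [Finset.sum_congr rfl (fun j (_ : j ∈ Finset.univ) => h2 j), Finset.sum_add_distrib,
      Finset.sum_neg_distrib, Finset.sum_congr rfl (fun j (_ : j ∈ Finset.univ) => hv2 j),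
      ← Finset.mul_sum]
  rw [hlin]
  have hsq : 0 ≤ ∑ i, (f i - g i) ^ 2 :=
    Finset.sum_nonneg (fun i _ => sq_nonneg _)
  have habs : ∑ j, v j * B.mulVec f j ≤ lam * ∑ j, |B.mulVec f j| := by
    rw [Finset.mul_sum]
    apply Finset.sum_le_sum
    intro j _
    calc v j * B.mulVec f j ≤ |v j * B.mulVec f j| := le_abs_self _
    _ = |v j| * |B.mulVec f j| := abs_mul _ _
    _ ≤ lam * |B.mulVec f j| := mul_le_mul_of_nonneg_right (hv1 j) (abs_nonneg _)
  linarith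

lemma oneDiff_colsum {N : ℕ} (hN : 2 ≤ N) (W : ℕ → ℝ) (hW0 : W 0 = 0) (hWN : W N = 0)
    (k : Fin N) :
    ∑ j : Fin (N - 1), oneDiff N j k * W ((j : ℕ) + 1) = W ((k : ℕ) + 1) - W (k : ℕ) := by
  have hk := k.isLt
  have key : ∀ j : Fin (N - 1), oneDiff N j k * W ((j : ℕ) + 1)
      = (if (j : ℕ) + 1 = (k : ℕ) + 1 then W ((k : ℕ) + 1) else 0)
        + (if (j : ℕ) + 1 = (k : ℕ) then -W (k : ℕ) else 0) := by
    intro j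
    unfold oneDiff
    by_cases h1 : (k : ℕ) = (j : ℕ)
    · rw [if_pos h1, if_pos (by omega : (j : ℕ) + 1 = (k : ℕ) + 1),
        if_neg (by omega : ¬((j : ℕ) + 1 = (k : ℕ)))]
      rw [← h1]
      ring
    · rw [if_neg h1, if_neg (by omega : ¬((j : ℕ) + 1 = (k : ℕ) + 1))]
      by_cases h2 : (k : ℕ) = (j : ℕ) + 1
      · rw [if_pos h2, if_pos h2.symm, ← h2]
        ring
      · rw [if_neg h2, if_neg (fun h => h2 h.symm)]
        ring
  rw [Finset.sum_congr rfl (fun j _ => key j), Finset.sum_add_distrib,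
    sum_fin_single (W ((k : ℕ) + 1)) ((k : ℕ) + 1), sum_fin_single (-W (k : ℕ)) (k : ℕ)]
  by_cases hk1 : (k : ℕ) + 1 ≤ N - 1
  · rw [if_pos ⟨by omega, hk1⟩]
    by_cases hk2 : 1 ≤ (k : ℕ)
    · rw [if_pos ⟨hk2, by omega⟩]; ring
    · rw [if_neg (by omega)]
      have : (k : ℕ) = 0 := by omega
      rw [this, hW0]
      ring
  · rw [if_neg (by omega)]
    have hkN : (k : ℕ) + 1 = N := by omega
    rw [hkN, hWN, if_pos ⟨by omega, by omega⟩]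
    ring

lemma pos_of_sign_eq_one {x : ℝ} (h : Real.sign x = 1) : 0 < x := by
  rcases lt_trichotomy x 0 with h1 | h1 | h1
  · rw [Real.sign_of_neg h1] at h; norm_num at h
  · rw [h1, Real.sign_zero] at h; norm_num at h
  · exact h1

lemma neg_of_sign_eq_neg_one {x : ℝ} (h : Real.sign x = -1) : x < 0 := by
  rcases lt_trichotomy x 0 with h1 | h1 | h1
  · exact h1
  · rw [h1, Real.sign_zero] at h; norm_num at h
  · rw [Real.sign_of_pos h1] at h; norm_num at h

lemma sum_fin_ite_sub {N : ℕ} (g h : Fin N → ℝ) (a b : ℕ) :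
    (∑ j : Fin N, if a ≤ (j : ℕ) ∧ (j : ℕ) < b then g j - h j else 0)
      = (∑ j : Fin N, if a ≤ (j : ℕ) ∧ (j : ℕ) < b then g j else 0)
        - (∑ j : Fin N, if a ≤ (j : ℕ) ∧ (j : ℕ) < b then h j else 0) := by
  rw [← Finset.sum_sub_distrib]
  apply Finset.sum_congr rfl
  intro j _
  split_ifs <;> ring

lemma sum_fin_window_congr {N : ℕ} (g h : Fin N → ℝ) (a b : ℕ)
    (hgh : ∀ j : Fin N, a ≤ (j : ℕ) → (j : ℕ) < b → g j = h j) :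
    (∑ j : Fin N, if a ≤ (j : ℕ) ∧ (j : ℕ) < b then g j else 0)
      = (∑ j : Fin N, if a ≤ (j : ℕ) ∧ (j : ℕ) < b then h j else 0) := by
  apply Finset.sum_congr rfl
  intro j _
  split_ifs with hc
  · exact hgh j hc.1 hc.2
  · rfl

/-- Cumulative sums of `fhat − y` over initial segments and within pieces. -/
lemma S_piece {N L : ℕ} (y fhat : Fin N → ℝ) (lam : ℝ) (Nb : ℕ → ℕ) (s hhat : ℕ → ℝ)
    (hNbL : Nb L = N) (hmono : ∀ a b, a ≤ b → b ≤ L → Nb a ≤ Nb b)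
    (hNb0 : Nb 0 = 0) (hs0 : s 0 = 0)
    (hstruct : ∀ l, 1 ≤ l → l ≤ L → ∀ j : Fin N, Nb (l - 1) ≤ (j : ℕ) →
      (j : ℕ) < Nb l → fhat j = hhat l)
    (hkey : ∀ l, 1 ≤ l → l ≤ L → ((Nb l - Nb (l - 1) : ℕ) : ℝ) * hhat l
      = (∑ j : Fin N, if Nb (l - 1) ≤ (j : ℕ) ∧ (j : ℕ) < Nb l then y j else 0)
        + (s l - s (l - 1)) * lam) :
    (∀ l, l ≤ L →
      (∑ j : Fin N, if 0 ≤ (j : ℕ) ∧ (j : ℕ) < Nb l then (fhat j - y j) else 0) = lam * s l)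
    ∧ (∀ l i, 1 ≤ l → l ≤ L → i ≤ Nb l - Nb (l - 1) →
      (∑ j : Fin N, if 0 ≤ (j : ℕ) ∧ (j : ℕ) < Nb (l - 1) + i then (fhat j - y j) else 0)
        = lam * s (l - 1) + (i : ℝ) * hhat l - piecePartialSum y Nb l i) := by
  have main : ∀ l, l ≤ L →
      (∑ j : Fin N, if 0 ≤ (j : ℕ) ∧ (j : ℕ) < Nb l then (fhat j - y j) else 0) = lam * s l := by
    intro l
    induction l with
    | zero =>
      intro _
      rw [hNb0, hs0, mul_zero]
      apply Finset.sum_eq_zero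
      intro j _
      rw [if_neg (by omega)]
    | succ l ih =>
      intro hlL
      have hl : l ≤ L := by omega
      have h1 : Nb l ≤ Nb (l + 1) := hmono l (l + 1) (by omega) hlL
      have h2 : Nb (l + 1) ≤ N := hNbL ▸ hmono (l + 1) L hlL le_rfl
      rw [sum_fin_ite_split (fun j => fhat j - y j) 0 (Nb l) (Nb (l + 1)) (by omega) h1,
        ih hl, sum_fin_ite_sub]
      have hf : (∑ j : Fin N, if Nb l ≤ (j : ℕ) ∧ (j : ℕ) < Nb (l + 1) then fhat j else 0)
          = ((Nb (l + 1) - Nb l : ℕ) : ℝ) * hhat (l + 1) := by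
        rw [sum_fin_window_congr fhat (fun _ => hhat (l + 1)) (Nb l) (Nb (l + 1))
          (fun j hj1 hj2 => hstruct (l + 1) (by omega) hlL j (by simpa using hj1) hj2),
          sum_fin_const _ _ _ h1 h2]
      rw [hf]
      have hk := hkey (l + 1) (by omega) hlL
      simp only [Nat.add_sub_cancel] at hk ⊢
      rw [hk]
      ring
  refine ⟨main, ?_⟩
  intro l i hl1 hlL hiNl
  have hm1 : Nb (l - 1) ≤ Nb l := hmono (l - 1) l (by omega) hlL
  have hNbN : Nb l ≤ N := hNbL ▸ hmono l L hlL le_rfl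
  have hwin : Nb (l - 1) + i ≤ Nb l := by omega
  rw [sum_fin_ite_split (fun j => fhat j - y j) 0 (Nb (l - 1)) (Nb (l - 1) + i) (by omega)
    (by omega), main (l - 1) (by omega), sum_fin_ite_sub]
  have hf : (∑ j : Fin N, if Nb (l - 1) ≤ (j : ℕ) ∧ (j : ℕ) < Nb (l - 1) + i
        then fhat j else 0) = (i : ℝ) * hhat l := by
    rw [sum_fin_window_congr fhat (fun _ => hhat l) (Nb (l - 1)) (Nb (l - 1) + i)
      (fun j hj1 hj2 => hstruct l hl1 hlL j hj1 (by omega)),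
      sum_fin_const _ _ _ (by omega) (by omega)]
    congr 2
    omega
  rw [hf]
  unfold piecePartialSum
  ring

lemma Nb_mono (Nb : ℕ → ℕ) (L : ℕ) (hadj : ∀ l, l < L → Nb l < Nb (l + 1)) :
    ∀ a b, a ≤ b → b ≤ L → Nb a ≤ Nb b := by
  intro a b hab hbL
  induction b with
  | zero =>
    have : a = 0 := by omega
    rw [this]
  | succ b ih =>
    rcases Nat.eq_or_lt_of_le hab with h | h
    · rw [h]
    · exact le_trans (ih (by omega) (by omega)) (le_of_lt (hadj b (by omega)))

lemma exists_piece (Nb : ℕ → ℕ) (L m : ℕ) (hNb0 : Nb 0 = 0) (hm : m < Nb L) :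
    ∃ l, 1 ≤ l ∧ l ≤ L ∧ Nb (l - 1) ≤ m ∧ m < Nb l := by
  have hne : ∃ l, m < Nb l := ⟨L, hm⟩
  set k := Nat.find hne with hk
  have hk1 : m < Nb k := Nat.find_spec hne
  have hkL : k ≤ L := Nat.find_le hm
  have hk0 : 1 ≤ k := by
    rcases Nat.eq_zero_or_pos k with h | h
    · rw [h, hNb0] at hk1; omega
    · exact h
  have hk2 : Nb (k - 1) ≤ m := by
    have := Nat.find_min hne (show k - 1 < k by omega)
    omega
  exact ⟨k, hk0, hkL, hk2, hk1⟩

lemma exists_edge (Nb : ℕ → ℕ) (L m : ℕ) (hNb0 : Nb 0 = 0) (hm0 : 1 ≤ m) (hm : m ≤ Nb L) :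
    ∃ l, 1 ≤ l ∧ l ≤ L ∧ Nb (l - 1) < m ∧ m ≤ Nb l := by
  have hne : ∃ l, m ≤ Nb l := ⟨L, hm⟩
  set k := Nat.find hne with hk
  have hk1 : m ≤ Nb k := Nat.find_spec hne
  have hkL : k ≤ L := Nat.find_le hm
  have hk0 : 1 ≤ k := by
    rcases Nat.eq_zero_or_pos k with h | h
    · rw [h, hNb0] at hk1; omega
    · exact h
  have hk2 : Nb (k - 1) < m := by
    have := Nat.find_min hne (show k - 1 < k by omega)
    omega
  exact ⟨k, hk0, hkL, hk2, hk1⟩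

lemma piece_unique (Nb : ℕ → ℕ) (L : ℕ)
    (hmono : ∀ a b, a ≤ b → b ≤ L → Nb a ≤ Nb b) (m l l' : ℕ)
    (h1 : 1 ≤ l) (h2 : l ≤ L) (h1' : 1 ≤ l') (h2' : l' ≤ L)
    (ha : Nb (l - 1) ≤ m) (hb : m < Nb l) (ha' : Nb (l' - 1) ≤ m) (hb' : m < Nb l') :
    l = l' := by
  rcases lt_trichotomy l l' with h | h | h
  · have := hmono l (l' - 1) (by omega) (by omega)
    omega
  · exact h
  · have := hmono l' (l - 1) (by omega) (by omega)
    omega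

/-- Theorem 3.1, KKT conditions for exact segmentation of 1D TV:
the TV estimate is constant on each piece `l` with value `ĥ_l` and
`sign(ĥ_{l+1} − ĥ_l) = s_l`, if and only if (i) `ĥ_l = ȳ_l + (s_l − s_{l−1})λ/N_l`;
(ii) `sign(ĥ_{l+1} − ĥ_l) = s_l`; (iii) the dual variables
`w_{N_{•(l−1)}+i} = −Σ_{k=1}^i y_{N_{•(l−1)}+k} + i·ĥ_l + λ s_{l−1}` (restricted to
indices `1,…,N−1`) all lie in `[−λ, λ]`. -/
theorem tv_exact_segmentation_kkt
    (N L : ℕ) (hN : 2 ≤ N) (hL : 1 ≤ L)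
    (y : Fin N → ℝ) (lam : ℝ) (hlam : 0 < lam)
    (Nb : ℕ → ℕ) (hNb0 : Nb 0 = 0) (hNbL : Nb L = N)
    (hNbmono : ∀ l, l < L → Nb l < Nb (l + 1))
    (s : ℕ → ℝ) (hs0 : s 0 = 0) (hsL : s L = 0)
    (hs : ∀ l, 1 ≤ l → l ≤ L - 1 → s l = 1 ∨ s l = -1)
    (hhat : ℕ → ℝ) :
    (∃ fhat : Fin N → ℝ,
      (∀ f : Fin N → ℝ, tvF (oneDiff N) lam y fhat ≤ tvF (oneDiff N) lam y f) ∧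
      (∀ l, 1 ≤ l → l ≤ L →
        ∀ j : Fin N, Nb (l - 1) ≤ (j : ℕ) → (j : ℕ) < Nb l → fhat j = hhat l) ∧
      (∀ l, 1 ≤ l → l ≤ L - 1 → Real.sign (hhat (l + 1) - hhat l) = s l)) ↔
    ((∀ l, 1 ≤ l → l ≤ L →
        hhat l = pieceMean y Nb l +
          (s l - s (l - 1)) * lam / ((Nb l - Nb (l - 1) : ℕ) : ℝ)) ∧
     (∀ l, 1 ≤ l → l ≤ L - 1 → Real.sign (hhat (l + 1) - hhat l) = s l) ∧
     (∀ l i : ℕ, 1 ≤ l → l ≤ L → 1 ≤ i → i ≤ Nb l - Nb (l - 1) →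
        Nb (l - 1) + i ≤ N - 1 →
        |(-piecePartialSum y Nb l i + (i : ℝ) * hhat l + lam * s (l - 1))| ≤ lam)) := by
  have hmono : ∀ a b, a ≤ b → b ≤ L → Nb a ≤ Nb b := Nb_mono Nb L hNbmono
  have hNpos : ∀ l, 1 ≤ l → l ≤ L → Nb (l - 1) < Nb l := by
    intro l h1 h2
    have h := hNbmono (l - 1) (by omega)
    have hl : l - 1 + 1 = l := by omega
    rwa [hl] at h
  have hNleN : ∀ l, l ≤ L → Nb l ≤ N := fun l h => hNbL ▸ hmono l L h le_rfl
  have hconv : ∀ l, 1 ≤ l → l ≤ L →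
      ((hhat l = pieceMean y Nb l + (s l - s (l - 1)) * lam / ((Nb l - Nb (l - 1) : ℕ) : ℝ)) ↔
        ((Nb l - Nb (l - 1) : ℕ) : ℝ) * hhat l
          = (∑ j : Fin N, if Nb (l - 1) ≤ (j : ℕ) ∧ (j : ℕ) < Nb l then y j else 0)
            + (s l - s (l - 1)) * lam) := by
    intro l h1 h2
    have hpos : (0 : ℝ) < ((Nb l - Nb (l - 1) : ℕ) : ℝ) := by
      have h := hNpos l h1 h2
      have : 0 < Nb l - Nb (l - 1) := by omega
      exact_mod_cast this
    rw [pieceMean, ← add_div, eq_div_iff (ne_of_gt hpos), mul_comm]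
  constructor
  · -- necessity
    rintro ⟨fhat, hmin, hstruct, hii⟩
    have hjump : ∀ l', 1 ≤ l' → l' ≤ L - 1 →
        (s l' = 1 ∧ hhat l' < hhat (l' + 1)) ∨ (s l' = -1 ∧ hhat (l' + 1) < hhat l') := by
      intro l' ha hb
      rcases hs l' ha hb with h | h
      · left
        refine ⟨h, ?_⟩
        have hx := pos_of_sign_eq_one (show Real.sign (hhat (l' + 1) - hhat l') = 1 by
          rw [hii l' ha hb, h])
        linarith
      · right
        refine ⟨h, ?_⟩
        have hx := neg_of_sign_eq_neg_one (show Real.sign (hhat (l' + 1) - hhat l') = -1 by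
          rw [hii l' ha hb, h])
        linarith
    have hineq : ∀ d : Fin N → ℝ, ∀ t : ℝ,
        0 ≤ (1 / 2) * ∑ i, ((fhat i + t * d i) - fhat i) ^ 2
          + ∑ i, (fhat i - y i) * ((fhat i + t * d i) - fhat i)
          + lam * (∑ j, |(oneDiff N).mulVec (fun k => fhat k + t * d k) j|
              - ∑ j, |(oneDiff N).mulVec fhat j|) := by
      intro d t
      have h1 := hmin (fun k => fhat k + t * d k)
      rw [tvF_expand (oneDiff N) lam y (fun k => fhat k + t * d k) fhat] at h1
      linarith
    -- Step 1: condition (i)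
    have hi : ∀ l, 1 ≤ l → l ≤ L →
        hhat l = pieceMean y Nb l + (s l - s (l - 1)) * lam / ((Nb l - Nb (l - 1) : ℕ) : ℝ) := by
      intro l h1 h2
      have hposl : Nb (l - 1) < Nb l := hNpos l h1 h2
      have hbN : Nb l ≤ N := hNleN l h2
      -- small positive thresholds for the two adjacent jumps
      have hεL : ∃ eL : ℝ, 0 < eL ∧ (2 ≤ l → eL ≤ |hhat l - hhat (l - 1)|) := by
        by_cases hc : 2 ≤ l
        · refine ⟨|hhat l - hhat (l - 1)|, ?_, fun _ => le_rfl⟩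
          have hj := hjump (l - 1) (by omega) (by omega)
          have hl1 : l - 1 + 1 = l := by omega
          rw [hl1] at hj
          rcases hj with ⟨_, hlt⟩ | ⟨_, hlt⟩
          · exact abs_pos.2 (by linarith)
          · exact abs_pos.2 (by linarith)
        · exact ⟨1, one_pos, fun h => absurd h hc⟩
      have hεR : ∃ eR : ℝ, 0 < eR ∧ (l ≤ L - 1 → eR ≤ |hhat (l + 1) - hhat l|) := by
        by_cases hc : l ≤ L - 1
        · refine ⟨|hhat (l + 1) - hhat l|, ?_, fun _ => le_rfl⟩
          have hj := hjump l h1 hc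
          rcases hj with ⟨_, hlt⟩ | ⟨_, hlt⟩
          · exact abs_pos.2 (by linarith)
          · exact abs_pos.2 (by linarith)
        · exact ⟨1, one_pos, fun h => absurd h hc⟩
      obtain ⟨eL, heL0, heL⟩ := hεL
      obtain ⟨eR, heR0, heR⟩ := hεR
      have hfull : ∀ t : ℝ, |t| < min eL eR →
          0 ≤ ((Nb l - Nb (l - 1) : ℕ) : ℝ) / 2 * t ^ 2
            + (((Nb l - Nb (l - 1) : ℕ) : ℝ) * hhat l
              - (∑ j : Fin N, if Nb (l - 1) ≤ (j : ℕ) ∧ (j : ℕ) < Nb l then y j else 0)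
              + lam * s (l - 1) - lam * s l) * t + 0 * |t| := by
        intro t ht
        have h := hineq (fun k => if Nb (l - 1) ≤ (k : ℕ) ∧ (k : ℕ) < Nb l then (1:ℝ) else 0) t
        beta_reduce at h
        -- quadratic term
        have hA : (∑ i : Fin N, ((fhat i + t * (if Nb (l - 1) ≤ (i : ℕ) ∧ (i : ℕ) < Nb l
              then (1:ℝ) else 0)) - fhat i) ^ 2)
            = t ^ 2 * (((Nb l - Nb (l - 1) : ℕ) : ℝ) * 1) := by
          rw [← sum_fin_const (1:ℝ) (Nb (l-1)) (Nb l) (le_of_lt hposl) hbN, Finset.mul_sum]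
          apply Finset.sum_congr rfl
          intro i _
          split_ifs <;> ring
        -- linear term
        have hB : (∑ i : Fin N, (fhat i - y i) * ((fhat i + t * (if Nb (l - 1) ≤ (i : ℕ)
              ∧ (i : ℕ) < Nb l then (1:ℝ) else 0)) - fhat i))
            = t * ((((Nb l - Nb (l - 1) : ℕ) : ℝ) * hhat l)
              - (∑ j : Fin N, if Nb (l - 1) ≤ (j : ℕ) ∧ (j : ℕ) < Nb l then y j else 0)) := by
          have hstep : (∑ i : Fin N, (fhat i - y i) * ((fhat i + t * (if Nb (l - 1) ≤ (i : ℕ)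
                ∧ (i : ℕ) < Nb l then (1:ℝ) else 0)) - fhat i))
              = t * (∑ i : Fin N, if Nb (l - 1) ≤ (i : ℕ) ∧ (i : ℕ) < Nb l
                  then fhat i - y i else 0) := by
            rw [Finset.mul_sum]
            apply Finset.sum_congr rfl
            intro i _
            split_ifs <;> ring
          rw [hstep, sum_fin_ite_sub fhat y (Nb (l - 1)) (Nb l),
            sum_fin_window_congr fhat (fun _ => hhat l) (Nb (l - 1)) (Nb l)
              (fun j hj1 hj2 => hstruct l h1 h2 j hj1 hj2),
            sum_fin_const (hhat l) (Nb (l - 1)) (Nb l) (le_of_lt hposl) hbN]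
        -- absolute-value term
        have hC : (∑ j, |(oneDiff N).mulVec (fun k => fhat k + t * (if Nb (l - 1) ≤ (k : ℕ)
              ∧ (k : ℕ) < Nb l then (1:ℝ) else 0)) j|)
            = (∑ j, |(oneDiff N).mulVec fhat j|) + (t * s (l - 1) - t * s l) := by
          have hrow : ∀ j : Fin (N - 1),
              |(oneDiff N).mulVec (fun k => fhat k + t * (if Nb (l - 1) ≤ (k : ℕ)
                  ∧ (k : ℕ) < Nb l then (1:ℝ) else 0)) j|
                = |(oneDiff N).mulVec fhat j|
                  + ((if (j : ℕ) + 1 = Nb (l - 1) then t * s (l - 1) else 0)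
                     + (if (j : ℕ) + 1 = Nb l then -(t * s l) else 0)) := by
            intro j
            have hjlt := j.isLt
            have hexp0 : (oneDiff N).mulVec fhat j
                = fhat ⟨(j : ℕ), by omega⟩ - fhat ⟨(j : ℕ) + 1, by omega⟩ :=
              oneDiff_mulVec fhat j
            have hexp : (oneDiff N).mulVec (fun k => fhat k + t * (if Nb (l - 1) ≤ (k : ℕ)
                  ∧ (k : ℕ) < Nb l then (1:ℝ) else 0)) j
                = (fhat ⟨(j : ℕ), by omega⟩ + t * (if Nb (l - 1) ≤ (j : ℕ)
                    ∧ (j : ℕ) < Nb l then (1:ℝ) else 0))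
                  - (fhat ⟨(j : ℕ) + 1, by omega⟩ + t * (if Nb (l - 1) ≤ (j : ℕ) + 1
                    ∧ (j : ℕ) + 1 < Nb l then (1:ℝ) else 0)) :=
              oneDiff_mulVec _ j
            by_cases hA : (j : ℕ) + 1 = Nb (l - 1)
            · -- left boundary of piece l
              have hl2 : 2 ≤ l := by
                by_contra hcon
                have hl1 : l - 1 = 0 := by omega
                rw [hl1, hNb0] at hA
                omega
              have hBne : ¬((j : ℕ) + 1 = Nb l) := by omega
              have hposl1 : Nb (l - 1 - 1) < Nb (l - 1) := hNpos (l - 1) (by omega) (by omega)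
              have hv0 : fhat ⟨(j : ℕ), by omega⟩ = hhat (l - 1) :=
                hstruct (l - 1) (by omega) (by omega) _
                  (show Nb (l - 1 - 1) ≤ (j : ℕ) by omega)
                  (show (j : ℕ) < Nb (l - 1) by omega)
              have hv1 : fhat ⟨(j : ℕ) + 1, by omega⟩ = hhat l :=
                hstruct l h1 h2 _ (show Nb (l - 1) ≤ (j : ℕ) + 1 by omega)
                  (show (j : ℕ) + 1 < Nb l by omega)
              have hd0 : ¬(Nb (l - 1) ≤ (j : ℕ) ∧ (j : ℕ) < Nb l) := by omega
              have hd1 : Nb (l - 1) ≤ (j : ℕ) + 1 ∧ (j : ℕ) + 1 < Nb l := by omega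
              rw [hexp, hexp0, hv0, hv1, if_neg hd0, if_pos hd1, if_pos hA, if_neg hBne]
              have hj := hjump (l - 1) (by omega) (by omega)
              rw [(show l - 1 + 1 = l by omega)] at hj
              have htb2 : |t| < |hhat l - hhat (l - 1)| :=
                lt_of_lt_of_le (lt_of_lt_of_le ht (min_le_left _ _)) (heL hl2)
              rcases hj with ⟨hs1, hlt⟩ | ⟨hs1, hlt⟩
              · rw [abs_of_pos (by linarith : (0:ℝ) < hhat l - hhat (l - 1))] at htb2
                obtain ⟨ht1, ht2⟩ := abs_lt.1 htb2
                rw [abs_of_neg (by linarith : hhat (l - 1) + t * 0 - (hhat l + t * 1) < 0),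
                  abs_of_neg (by linarith : hhat (l - 1) - hhat l < 0), hs1]
                ring
              · rw [abs_of_neg (by linarith : hhat l - hhat (l - 1) < 0)] at htb2
                obtain ⟨ht1, ht2⟩ := abs_lt.1 htb2
                rw [abs_of_pos (by linarith : (0:ℝ) < hhat (l - 1) + t * 0 - (hhat l + t * 1)),
                  abs_of_pos (by linarith : (0:ℝ) < hhat (l - 1) - hhat l), hs1]
                ring
            · by_cases hB : (j : ℕ) + 1 = Nb l
              · -- right boundary of piece l
                have hlL : l ≤ L - 1 := by
                  by_contra hcon
                  have hlL2 : l = L := by omega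
                  rw [hlL2, hNbL] at hB
                  omega
                have hq : Nb l < Nb (l + 1) := by
                  have h := hNpos (l + 1) (by omega) (by omega)
                  simpa using h
                have hv0 : fhat ⟨(j : ℕ), by omega⟩ = hhat l :=
                  hstruct l h1 h2 _ (show Nb (l - 1) ≤ (j : ℕ) by omega)
                    (show (j : ℕ) < Nb l by omega)
                have hv1 : fhat ⟨(j : ℕ) + 1, by omega⟩ = hhat (l + 1) :=
                  hstruct (l + 1) (by omega) (by omega) _
                    (show Nb (l + 1 - 1) ≤ (j : ℕ) + 1 by
                      simp only [Nat.add_sub_cancel]; omega)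
                    (show (j : ℕ) + 1 < Nb (l + 1) by omega)
                have hd0 : Nb (l - 1) ≤ (j : ℕ) ∧ (j : ℕ) < Nb l := by omega
                have hd1 : ¬(Nb (l - 1) ≤ (j : ℕ) + 1 ∧ (j : ℕ) + 1 < Nb l) := by omega
                rw [hexp, hexp0, hv0, hv1, if_pos hd0, if_neg hd1, if_neg hA, if_pos hB]
                have hj := hjump l h1 hlL
                have htb2 : |t| < |hhat (l + 1) - hhat l| :=
                  lt_of_lt_of_le (lt_of_lt_of_le ht (min_le_right _ _)) (heR hlL)
                rcases hj with ⟨hs1, hlt⟩ | ⟨hs1, hlt⟩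
                · rw [abs_of_pos (by linarith : (0:ℝ) < hhat (l + 1) - hhat l)] at htb2
                  obtain ⟨ht1, ht2⟩ := abs_lt.1 htb2
                  rw [abs_of_neg (by linarith : hhat l + t * 1 - (hhat (l + 1) + t * 0) < 0),
                    abs_of_neg (by linarith : hhat l - hhat (l + 1) < 0), hs1]
                  ring
                · rw [abs_of_neg (by linarith : hhat (l + 1) - hhat l < 0)] at htb2
                  obtain ⟨ht1, ht2⟩ := abs_lt.1 htb2
                  rw [abs_of_pos (by linarith : (0:ℝ) < hhat l + t * 1 - (hhat (l + 1) + t * 0)),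
                    abs_of_pos (by linarith : (0:ℝ) < hhat l - hhat (l + 1)), hs1]
                  ring
              · -- interior edge
                have hdd : (if Nb (l - 1) ≤ (j : ℕ) ∧ (j : ℕ) < Nb l then (1:ℝ) else 0)
                    = (if Nb (l - 1) ≤ (j : ℕ) + 1 ∧ (j : ℕ) + 1 < Nb l then (1:ℝ) else 0) := by
                  by_cases hc : Nb (l - 1) ≤ (j : ℕ) + 1 ∧ (j : ℕ) + 1 < Nb l
                  · rw [if_pos hc, if_pos (by omega : Nb (l - 1) ≤ (j : ℕ) ∧ (j : ℕ) < Nb l)]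
                  · rw [if_neg hc, if_neg (by omega : ¬(Nb (l - 1) ≤ (j : ℕ) ∧ (j : ℕ) < Nb l))]
                rw [hexp, hexp0, if_neg hA, if_neg hB, hdd]
                rw [show (fhat ⟨(j : ℕ), by omega⟩ + t * (if Nb (l - 1) ≤ (j : ℕ) + 1
                      ∧ (j : ℕ) + 1 < Nb l then (1:ℝ) else 0))
                    - (fhat ⟨(j : ℕ) + 1, by omega⟩ + t * (if Nb (l - 1) ≤ (j : ℕ) + 1
                      ∧ (j : ℕ) + 1 < Nb l then (1:ℝ) else 0))
                    = fhat ⟨(j : ℕ), by omega⟩ - fhat ⟨(j : ℕ) + 1, by omega⟩ from by ring]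
                ring
          rw [Finset.sum_congr rfl (fun j (_ : j ∈ Finset.univ) => hrow j),
            Finset.sum_add_distrib, Finset.sum_add_distrib,
            sum_fin_single (t * s (l - 1)) (Nb (l - 1)), sum_fin_single (-(t * s l)) (Nb l)]
          have e1 : (if 1 ≤ Nb (l - 1) ∧ Nb (l - 1) ≤ N - 1 then t * s (l - 1) else 0)
              = t * s (l - 1) := by
            by_cases hc : 2 ≤ l
            · have hp1 : Nb (l - 1 - 1) < Nb (l - 1) := hNpos (l - 1) (by omega) (by omega)
              rw [if_pos ⟨by omega, by omega⟩]
            · have hl1 : l - 1 = 0 := by omega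
              rw [hl1, hNb0, hs0, if_neg (by omega)]
              ring
          have e2 : (if 1 ≤ Nb l ∧ Nb l ≤ N - 1 then -(t * s l) else 0) = -(t * s l) := by
            by_cases hc : l ≤ L - 1
            · have hq : Nb l < Nb (l + 1) := hNbmono l (by omega)
              have hq2 : Nb (l + 1) ≤ N := hNleN (l + 1) (by omega)
              rw [if_pos ⟨by omega, by omega⟩]
            · have hlL2 : l = L := by omega
              rw [hlL2, hNbL, hsL, if_neg (by omega)]
              ring
          rw [e1, e2]
          ring

        rw [hA, hB, hC] at h
        have hre : ((Nb l - Nb (l - 1) : ℕ) : ℝ) / 2 * t ^ 2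
            + (((Nb l - Nb (l - 1) : ℕ) : ℝ) * hhat l
              - (∑ j : Fin N, if Nb (l - 1) ≤ (j : ℕ) ∧ (j : ℕ) < Nb l then y j else 0)
              + lam * s (l - 1) - lam * s l) * t + 0 * |t|
            = 1 / 2 * (t ^ 2 * (((Nb l - Nb (l - 1) : ℕ) : ℝ) * 1))
              + t * ((((Nb l - Nb (l - 1) : ℕ) : ℝ) * hhat l)
                - (∑ j : Fin N, if Nb (l - 1) ≤ (j : ℕ) ∧ (j : ℕ) < Nb l then y j else 0))
              + lam * ((∑ j, |(oneDiff N).mulVec fhat j|) + (t * s (l - 1) - t * s l)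
                - ∑ j, |(oneDiff N).mulVec fhat j|) := by
          ring
        rw [hre]
        exact h
      have hkey := key_small (((Nb l - Nb (l - 1) : ℕ) : ℝ) / 2) 0
        (((Nb l - Nb (l - 1) : ℕ) : ℝ) * hhat l
          - (∑ j : Fin N, if Nb (l - 1) ≤ (j : ℕ) ∧ (j : ℕ) < Nb l then y j else 0)
          + lam * s (l - 1) - lam * s l) (min eL eR) (by positivity) (lt_min heL0 heR0) hfull
      have hc0 : ((Nb l - Nb (l - 1) : ℕ) : ℝ) * hhat l
          - (∑ j : Fin N, if Nb (l - 1) ≤ (j : ℕ) ∧ (j : ℕ) < Nb l then y j else 0)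
          + lam * s (l - 1) - lam * s l = 0 := by
        have := abs_nonneg (((Nb l - Nb (l - 1) : ℕ) : ℝ) * hhat l
          - (∑ j : Fin N, if Nb (l - 1) ≤ (j : ℕ) ∧ (j : ℕ) < Nb l then y j else 0)
          + lam * s (l - 1) - lam * s l)
        have habs : |((Nb l - Nb (l - 1) : ℕ) : ℝ) * hhat l
          - (∑ j : Fin N, if Nb (l - 1) ≤ (j : ℕ) ∧ (j : ℕ) < Nb l then y j else 0)
          + lam * s (l - 1) - lam * s l| = 0 := le_antisymm hkey this
        exact abs_eq_zero.1 habs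
      exact (hconv l h1 h2).mpr (by linarith)
    refine ⟨hi, hii, ?_⟩
    -- Step 2: condition (iii)
    intro l i h1 h2 hi1 hiN hm
    have hposl : Nb (l - 1) < Nb l := hNpos l h1 h2
    have hbN : Nb l ≤ N := hNleN l h2
    have hkeyl := (hconv l h1 h2).mp (hi l h1 h2)
    by_cases hcase : i = Nb l - Nb (l - 1)
    · -- boundary edge: the value is `lam * s l`
      have hmb : Nb (l - 1) + i = Nb l := by omega
      have hlL : l ≤ L - 1 := by
        by_contra hcon
        have hteq : l = L := by omega
        have hNN : Nb l = N := by rw [hteq, hNbL]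
        omega
      have hps : piecePartialSum y Nb l i
          = ∑ j : Fin N, if Nb (l - 1) ≤ (j : ℕ) ∧ (j : ℕ) < Nb l then y j else 0 := by
        unfold piecePartialSum
        rw [hmb]
      have hiNc : (i : ℝ) = ((Nb l - Nb (l - 1) : ℕ) : ℝ) := by
        exact_mod_cast congrArg (fun n : ℕ => (n : ℝ)) hcase
      have hval : -piecePartialSum y Nb l i + (i : ℝ) * hhat l + lam * s (l - 1)
          = lam * s l := by
        rw [hps, hiNc]
        linarith [hkeyl]
      rw [hval]
      rcases hs l h1 hlL with h | h
      · rw [h, mul_one, abs_of_pos hlam]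
      · rw [h, mul_neg_one, abs_neg, abs_of_pos hlam]
    · -- interior edge
      have hilt : i < Nb l - Nb (l - 1) := by omega
      obtain ⟨hS1, hS2⟩ := S_piece y fhat lam Nb s hhat hNbL hmono hNb0 hs0 hstruct
        (fun l' ha hb => (hconv l' ha hb).mp (hi l' ha hb))
      have hfull : ∀ t : ℝ, |t| < 1 →
          0 ≤ ((Nb (l - 1) + i : ℕ) : ℝ) / 2 * t ^ 2
            + (∑ j : Fin N, if 0 ≤ (j : ℕ) ∧ (j : ℕ) < Nb (l - 1) + i
                then fhat j - y j else 0) * t + lam * |t| := by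
        intro t ht
        have h := hineq (fun k => if 0 ≤ (k : ℕ) ∧ (k : ℕ) < Nb (l - 1) + i
          then (1:ℝ) else 0) t
        beta_reduce at h
        have hA : (∑ i' : Fin N, ((fhat i' + t * (if 0 ≤ (i' : ℕ)
              ∧ (i' : ℕ) < Nb (l - 1) + i then (1:ℝ) else 0)) - fhat i') ^ 2)
            = t ^ 2 * (((Nb (l - 1) + i - 0 : ℕ) : ℝ) * 1) := by
          rw [← sum_fin_const (N := N) (1:ℝ) 0 (Nb (l - 1) + i) (by omega)
            (by omega : Nb (l - 1) + i ≤ N), Finset.mul_sum]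
          apply Finset.sum_congr rfl
          intro i' _
          split_ifs <;> ring
        rw [Nat.sub_zero] at hA
        have hB : (∑ i' : Fin N, (fhat i' - y i') * ((fhat i' + t * (if 0 ≤ (i' : ℕ)
              ∧ (i' : ℕ) < Nb (l - 1) + i then (1:ℝ) else 0)) - fhat i'))
            = t * (∑ j : Fin N, if 0 ≤ (j : ℕ) ∧ (j : ℕ) < Nb (l - 1) + i
                then fhat j - y j else 0) := by
          rw [Finset.mul_sum]
          apply Finset.sum_congr rfl
          intro i' _
          split_ifs <;> ring
        have hC : (∑ j, |(oneDiff N).mulVec (fun k => fhat k + t * (if 0 ≤ (k : ℕ)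
              ∧ (k : ℕ) < Nb (l - 1) + i then (1:ℝ) else 0)) j|)
            = (∑ j, |(oneDiff N).mulVec fhat j|) + |t| := by
          have hrow : ∀ j : Fin (N - 1),
              |(oneDiff N).mulVec (fun k => fhat k + t * (if 0 ≤ (k : ℕ)
                  ∧ (k : ℕ) < Nb (l - 1) + i then (1:ℝ) else 0)) j|
                = |(oneDiff N).mulVec fhat j|
                  + (if (j : ℕ) + 1 = Nb (l - 1) + i then |t| else 0) := by
            intro j
            have hjlt := j.isLt
            have hexp0 : (oneDiff N).mulVec fhat j
                = fhat ⟨(j : ℕ), by omega⟩ - fhat ⟨(j : ℕ) + 1, by omega⟩ :=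
              oneDiff_mulVec fhat j
            have hexp : (oneDiff N).mulVec (fun k => fhat k + t * (if 0 ≤ (k : ℕ)
                  ∧ (k : ℕ) < Nb (l - 1) + i then (1:ℝ) else 0)) j
                = (fhat ⟨(j : ℕ), by omega⟩ + t * (if 0 ≤ (j : ℕ)
                    ∧ (j : ℕ) < Nb (l - 1) + i then (1:ℝ) else 0))
                  - (fhat ⟨(j : ℕ) + 1, by omega⟩ + t * (if 0 ≤ (j : ℕ) + 1
                    ∧ (j : ℕ) + 1 < Nb (l - 1) + i then (1:ℝ) else 0)) :=
              oneDiff_mulVec _ j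
            by_cases hr : (j : ℕ) + 1 = Nb (l - 1) + i
            · have hd0 : 0 ≤ (j : ℕ) ∧ (j : ℕ) < Nb (l - 1) + i := by omega
              have hd1 : ¬(0 ≤ (j : ℕ) + 1 ∧ (j : ℕ) + 1 < Nb (l - 1) + i) := by omega
              have hv0 : fhat ⟨(j : ℕ), by omega⟩ = hhat l :=
                hstruct l h1 h2 _ (show Nb (l - 1) ≤ (j : ℕ) by omega)
                  (show (j : ℕ) < Nb l by omega)
              have hv1 : fhat ⟨(j : ℕ) + 1, by omega⟩ = hhat l :=
                hstruct l h1 h2 _ (show Nb (l - 1) ≤ (j : ℕ) + 1 by omega)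
                  (show (j : ℕ) + 1 < Nb l by omega)
              rw [hexp, hexp0, hv0, hv1, if_pos hd0, if_neg hd1, if_pos hr,
                show hhat l + t * 1 - (hhat l + t * 0) = t from by ring, sub_self, abs_zero,
                zero_add]
            · have hdd : (if 0 ≤ (j : ℕ) ∧ (j : ℕ) < Nb (l - 1) + i then (1:ℝ) else 0)
                  = (if 0 ≤ (j : ℕ) + 1 ∧ (j : ℕ) + 1 < Nb (l - 1) + i
                      then (1:ℝ) else 0) := by
                by_cases hc : 0 ≤ (j : ℕ) + 1 ∧ (j : ℕ) + 1 < Nb (l - 1) + i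
                · rw [if_pos hc, if_pos (by omega : 0 ≤ (j : ℕ) ∧ (j : ℕ) < Nb (l - 1) + i)]
                · rw [if_neg hc,
                    if_neg (by omega : ¬(0 ≤ (j : ℕ) ∧ (j : ℕ) < Nb (l - 1) + i))]
              rw [hexp, hexp0, hdd, if_neg hr,
                show (fhat ⟨(j : ℕ), by omega⟩ + t * (if 0 ≤ (j : ℕ) + 1
                      ∧ (j : ℕ) + 1 < Nb (l - 1) + i then (1:ℝ) else 0))
                    - (fhat ⟨(j : ℕ) + 1, by omega⟩ + t * (if 0 ≤ (j : ℕ) + 1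
                      ∧ (j : ℕ) + 1 < Nb (l - 1) + i then (1:ℝ) else 0))
                    = fhat ⟨(j : ℕ), by omega⟩ - fhat ⟨(j : ℕ) + 1, by omega⟩ from by ring]
              ring
          rw [Finset.sum_congr rfl (fun j (_ : j ∈ Finset.univ) => hrow j),
            Finset.sum_add_distrib, sum_fin_single |t| (Nb (l - 1) + i),
            if_pos ⟨by omega, hm⟩]
        rw [hA, hB, hC] at h
        have hre : ((Nb (l - 1) + i : ℕ) : ℝ) / 2 * t ^ 2
            + (∑ j : Fin N, if 0 ≤ (j : ℕ) ∧ (j : ℕ) < Nb (l - 1) + i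
                then fhat j - y j else 0) * t + lam * |t|
            = 1 / 2 * (t ^ 2 * (((Nb (l - 1) + i : ℕ) : ℝ) * 1))
              + t * (∑ j : Fin N, if 0 ≤ (j : ℕ) ∧ (j : ℕ) < Nb (l - 1) + i
                  then fhat j - y j else 0)
              + lam * ((∑ j, |(oneDiff N).mulVec fhat j|) + |t|
                - ∑ j, |(oneDiff N).mulVec fhat j|) := by
          ring
        rw [hre]
        exact h
      have hkey2 := key_small (((Nb (l - 1) + i : ℕ) : ℝ) / 2) lam
        (∑ j : Fin N, if 0 ≤ (j : ℕ) ∧ (j : ℕ) < Nb (l - 1) + i then fhat j - y j else 0)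
        1 (by positivity) one_pos hfull
      have hS := hS2 l i h1 h2 (le_of_lt hilt)
      rw [hS] at hkey2
      rw [show -piecePartialSum y Nb l i + (i : ℝ) * hhat l + lam * s (l - 1)
        = lam * s (l - 1) + (i : ℝ) * hhat l - piecePartialSum y Nb l i from by ring]
      exact hkey2

  · -- sufficiency
    rintro ⟨hi, hii, hiii⟩
    have hkey : ∀ l', 1 ≤ l' → l' ≤ L → ((Nb l' - Nb (l' - 1) : ℕ) : ℝ) * hhat l'
        = (∑ j : Fin N, if Nb (l' - 1) ≤ (j : ℕ) ∧ (j : ℕ) < Nb l' then y j else 0)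
          + (s l' - s (l' - 1)) * lam :=
      fun l' ha hb => (hconv l' ha hb).mp (hi l' ha hb)
    have hex : ∀ m : ℕ, ∃ l', m < Nb l' ∨ l' = L := fun m => ⟨L, Or.inr rfl⟩
    set pidx : ℕ → ℕ := fun m => Nat.find (hex m) with hpidx
    have hpspec : ∀ m : ℕ, m < N → 1 ≤ pidx m ∧ pidx m ≤ L ∧ Nb (pidx m - 1) ≤ m
        ∧ m < Nb (pidx m) := by
      intro m hmN
      have hQ : m < Nb (pidx m) ∨ pidx m = L := Nat.find_spec (hex m)
      have hle : pidx m ≤ L := Nat.find_le (Or.inr rfl)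
      have hlt : m < Nb (pidx m) := by
        rcases hQ with h | h
        · exact h
        · rw [h, hNbL]; exact hmN
      have h1 : 1 ≤ pidx m := by
        by_contra hcon
        have h0 : pidx m = 0 := by omega
        rcases hQ with h | h
        · rw [h0, hNb0] at h; omega
        · omega
      have h2 : Nb (pidx m - 1) ≤ m := by
        have hmin := Nat.find_min (hex m) (show pidx m - 1 < pidx m by omega)
        push_neg at hmin
        obtain ⟨ha, hb⟩ := hmin
        omega
      exact ⟨h1, hle, h2, hlt⟩
    set fhat : Fin N → ℝ := fun j => hhat (pidx (j : ℕ)) with hfhat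
    have hstruct : ∀ l', 1 ≤ l' → l' ≤ L → ∀ j : Fin N, Nb (l' - 1) ≤ (j : ℕ) →
        (j : ℕ) < Nb l' → fhat j = hhat l' := by
      intro l' ha hb j hj1 hj2
      obtain ⟨p1, p2, p3, p4⟩ := hpspec (j : ℕ) j.isLt
      have heq : pidx (j : ℕ) = l' :=
        piece_unique Nb L hmono (j : ℕ) (pidx (j : ℕ)) l' p1 p2 ha hb p3 p4 hj1 hj2
      show hhat (pidx (j : ℕ)) = hhat l'
      rw [heq]
    obtain ⟨hS1, hS2⟩ := S_piece y fhat lam Nb s hhat hNbL hmono hNb0 hs0 hstruct hkey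
    have hSN : (∑ j : Fin N, if 0 ≤ (j : ℕ) ∧ (j : ℕ) < N then fhat j - y j else 0) = 0 := by
      have h := hS1 L le_rfl
      rw [hNbL] at h
      rw [h, hsL, mul_zero]
    refine ⟨fhat, ?_, hstruct, hii⟩
    have hv1 : ∀ j : Fin (N - 1),
        |(-(∑ j' : Fin N, if 0 ≤ (j' : ℕ) ∧ (j' : ℕ) < (j : ℕ) + 1
          then fhat j' - y j' else 0) : ℝ)| ≤ lam := by
      intro j
      have hjlt := j.isLt
      obtain ⟨l', ha, hb, hc, hd⟩ := exists_edge Nb L ((j : ℕ) + 1) hNb0 (by omega)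
        (by rw [hNbL]; omega)
      have hieq : Nb (l' - 1) + ((j : ℕ) + 1 - Nb (l' - 1)) = (j : ℕ) + 1 := by omega
      have hS := hS2 l' ((j : ℕ) + 1 - Nb (l' - 1)) ha hb (by omega)
      rw [hieq] at hS
      rw [abs_neg, hS]
      have h3 := hiii l' ((j : ℕ) + 1 - Nb (l' - 1)) ha hb (by omega) (by omega) (by omega)
      rw [show lam * s (l' - 1) + (((j : ℕ) + 1 - Nb (l' - 1) : ℕ) : ℝ) * hhat l'
          - piecePartialSum y Nb l' ((j : ℕ) + 1 - Nb (l' - 1))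
        = -piecePartialSum y Nb l' ((j : ℕ) + 1 - Nb (l' - 1))
          + (((j : ℕ) + 1 - Nb (l' - 1) : ℕ) : ℝ) * hhat l' + lam * s (l' - 1) from by ring]
      exact h3
    have hv2 : ∀ j : Fin (N - 1),
        (-(∑ j' : Fin N, if 0 ≤ (j' : ℕ) ∧ (j' : ℕ) < (j : ℕ) + 1
            then fhat j' - y j' else 0) : ℝ) * (oneDiff N).mulVec fhat j
          = lam * |(oneDiff N).mulVec fhat j| := by
      intro j
      have hjlt := j.isLt
      obtain ⟨l', ha, hb, hc, hd⟩ := exists_edge Nb L ((j : ℕ) + 1) hNb0 (by omega)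
        (by rw [hNbL]; omega)
      have hexp0 : (oneDiff N).mulVec fhat j
          = fhat ⟨(j : ℕ), by omega⟩ - fhat ⟨(j : ℕ) + 1, by omega⟩ :=
        oneDiff_mulVec fhat j
      have hv0 : fhat ⟨(j : ℕ), by omega⟩ = hhat l' :=
        hstruct l' ha hb _ (show Nb (l' - 1) ≤ (j : ℕ) by omega)
          (show (j : ℕ) < Nb l' by omega)
      by_cases hB : (j : ℕ) + 1 = Nb l'
      · have hlL : l' ≤ L - 1 := by
          by_contra hcon
          have hteq : l' = L := by omega
          rw [hteq, hNbL] at hB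
          omega
        have hq : Nb l' < Nb (l' + 1) := hNbmono l' (by omega)
        have hv1' : fhat ⟨(j : ℕ) + 1, by omega⟩ = hhat (l' + 1) :=
          hstruct (l' + 1) (by omega) (by omega) _
            (show Nb (l' + 1 - 1) ≤ (j : ℕ) + 1 by simp only [Nat.add_sub_cancel]; omega)
            (show (j : ℕ) + 1 < Nb (l' + 1) by omega)
        have hvS : (∑ j' : Fin N, if 0 ≤ (j' : ℕ) ∧ (j' : ℕ) < (j : ℕ) + 1
            then fhat j' - y j' else 0) = lam * s l' := by
          have h := hS1 l' hb
          rw [← hB] at h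
          exact h
        rw [hexp0, hv0, hv1', hvS]
        rcases hs l' ha hlL with h | h
        · have hlt := pos_of_sign_eq_one
            (show Real.sign (hhat (l' + 1) - hhat l') = 1 by rw [hii l' ha hlL, h])
          rw [h, abs_of_neg (by linarith : hhat l' - hhat (l' + 1) < 0)]
          ring
        · have hlt := neg_of_sign_eq_neg_one
            (show Real.sign (hhat (l' + 1) - hhat l') = -1 by rw [hii l' ha hlL, h])
          rw [h, abs_of_pos (by linarith : (0:ℝ) < hhat l' - hhat (l' + 1))]
          ring
      · have hv1' : fhat ⟨(j : ℕ) + 1, by omega⟩ = hhat l' :=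
          hstruct l' ha hb _ (show Nb (l' - 1) ≤ (j : ℕ) + 1 by omega)
            (show (j : ℕ) + 1 < Nb l' by omega)
        rw [hexp0, hv0, hv1', sub_self, mul_zero, abs_zero, mul_zero]
    have hv3 : ∀ k : Fin N, fhat k - y k
        = -∑ j : Fin (N - 1), oneDiff N j k
            * (-(∑ j' : Fin N, if 0 ≤ (j' : ℕ) ∧ (j' : ℕ) < (j : ℕ) + 1
                then fhat j' - y j' else 0) : ℝ) := by
      intro k
      have hW0 : (fun m : ℕ => -(∑ j' : Fin N, if 0 ≤ (j' : ℕ) ∧ (j' : ℕ) < m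
          then fhat j' - y j' else 0 : ℝ)) 0 = 0 := by
        beta_reduce
        rw [Finset.sum_eq_zero (fun j' _ => by rw [if_neg (by omega)]), neg_zero]
      have hWN : (fun m : ℕ => -(∑ j' : Fin N, if 0 ≤ (j' : ℕ) ∧ (j' : ℕ) < m
          then fhat j' - y j' else 0 : ℝ)) N = 0 := by
        beta_reduce
        rw [hSN, neg_zero]
      have hcol := oneDiff_colsum hN (fun m : ℕ => -(∑ j' : Fin N, if 0 ≤ (j' : ℕ)
        ∧ (j' : ℕ) < m then fhat j' - y j' else 0 : ℝ)) hW0 hWN k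
      beta_reduce at hcol
      rw [hcol]
      have hsplit := sum_fin_ite_split (fun j' => fhat j' - y j') 0 (k : ℕ) ((k : ℕ) + 1)
        (by omega) (by omega)
      have hw1 := sum_fin_window_one (fun j' => fhat j' - y j') (k : ℕ) k.isLt
      simp only [Fin.eta] at hw1
      beta_reduce at hsplit hw1
      rw [hsplit, hw1]
      ring
    exact tvF_min_of_dual (oneDiff N) lam y fhat
      (fun j => -(∑ j' : Fin N, if 0 ≤ (j' : ℕ) ∧ (j' : ℕ) < (j : ℕ) + 1
        then fhat j' - y j' else 0)) hv1 hv2 hv3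
end

section
/- Let σ > 0 and for each n ≥ 2 let ε₁,…,ε_n be i.i.d. N(0,σ²) random variables with sample mean ε̄, and set W_i = Σ_{k=1}^i (ε_k − ε̄). Then the probability that the centered partial sums stay one-signed tends to zero: ℙ( W_i ≥ 0 for all i = 1,…,n−1 ) → 0 as n → ∞ (and likewise for the event { W_i ≤ 0 for all i }). -/
open MeasureTheory ProbabilityTheory

open scoped ENNReal

namespace DBridge

variable {n : ℕ}

noncomputable def dd (n : ℕ) (ω : Fin n → ℝ) (k : ℕ) : ℝ :=
  if h : k < n then ω ⟨k, h⟩ - (∑ m, ω m) / (n : ℝ) else 0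

noncomputable def ee (n : ℕ) (ω : Fin n → ℝ) (k : ℕ) : ℝ := dd n ω (k % n)

noncomputable def G (n : ℕ) (ω : Fin n → ℝ) (i : ℕ) : ℝ := ∑ k ∈ Finset.range i, ee n ω k

lemma sum_ite_fin (f : ℕ → ℝ) {i : ℕ} (hi : i ≤ n) :
    (∑ k : Fin n, if (k : ℕ) < i then f (k : ℕ) else 0) = ∑ k ∈ Finset.range i, f k := by
  rw [Fin.sum_univ_eq_sum_range (fun k => if k < i then f k else 0) n]
  rw [← Finset.sum_subset (Finset.range_subset_range.2 hi)
    (fun x _ hx => by simp [Finset.mem_range, not_lt] at hx; simp [Nat.not_lt.2 hx, if_neg])]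
  exact Finset.sum_congr rfl (fun x hx => by simp [Finset.mem_range.1 hx])

lemma sum_range_dite (g : Fin n → ℝ) :
    (∑ k ∈ Finset.range n, if h : k < n then g ⟨k, h⟩ else 0) = ∑ m, g m := by
  rw [← Fin.sum_univ_eq_sum_range (fun k => if h : k < n then g ⟨k, h⟩ else 0) n]
  exact Finset.sum_congr rfl (fun x _ => by simp [x.isLt])

lemma sum_dd (hn : 0 < n) (ω : Fin n → ℝ) : ∑ k ∈ Finset.range n, dd n ω k = 0 := by
  have h : ∀ k ∈ Finset.range n, dd n ω k
      = (if h : k < n then ω ⟨k, h⟩ else 0) - (if h : k < n then ((∑ m, ω m)/n : ℝ) else 0) := by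
    intro k hk
    simp [dd, Finset.mem_range.1 hk]
  rw [Finset.sum_congr rfl h, Finset.sum_sub_distrib, sum_range_dite ω,
    sum_range_dite (fun _ => (∑ m, ω m)/n), Finset.sum_const, Finset.card_fin]
  rw [nsmul_eq_mul, mul_div_cancel₀]
  · ring
  · exact Nat.cast_ne_zero.2 hn.ne'

lemma ee_eq_dd {k : ℕ} (hk : k < n) (ω : Fin n → ℝ) : ee n ω k = dd n ω k := by
  simp [ee, Nat.mod_eq_of_lt hk]

lemma G_eq_sum_ite (ω : Fin n → ℝ) {i : ℕ} (hi : i ≤ n) :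
    G n ω i = ∑ k : Fin n, if (k : ℕ) < i then ω k - (∑ m, ω m) / (n : ℝ) else 0 := by
  have : ∀ k : Fin n, (if (k : ℕ) < i then ω k - (∑ m, ω m) / (n : ℝ) else 0)
      = if (k : ℕ) < i then dd n ω (k : ℕ) else 0 := by
    intro k; simp [dd, k.isLt]
  rw [Finset.sum_congr rfl (fun k _ => this k), sum_ite_fin (dd n ω) hi]
  exact Finset.sum_congr rfl (fun k hk => ee_eq_dd (lt_of_lt_of_le (Finset.mem_range.1 hk) hi) ω)

lemma G_add_period (hn : 0 < n) (ω : Fin n → ℝ) (i : ℕ) : G n ω (i + n) = G n ω i := by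
  induction i with
  | zero => simpa [G] using (Finset.sum_congr rfl fun k hk =>
      ee_eq_dd (Finset.mem_range.1 hk) ω).trans (sum_dd hn ω)
  | succ i ih =>
      have h1 : G n ω (i + 1 + n) = G n ω (i + n) + ee n ω (i + n) := by
        rw [show i + 1 + n = (i + n) + 1 by ring, G, Finset.sum_range_succ]; rfl
      have h2 : ee n ω (i + n) = ee n ω i := by simp [ee, Nat.add_mod_right]
      rw [h1, h2, ih, G, G, Finset.sum_range_succ]

lemma G_mod (hn : 0 < n) (ω : Fin n → ℝ) (i : ℕ) : G n ω (i % n) = G n ω i := by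
  induction i using Nat.strong_induction_on with
  | _ i ih =>
    by_cases h : i < n
    · rw [Nat.mod_eq_of_lt h]
    · push_neg at h
      have h1 : i = (i - n) + n := by omega
      rw [h1, G_add_period hn, Nat.add_mod_right, ih (i - n) (by omega)]

lemma measurable_G (i : ℕ) : Measurable (fun ω : Fin n → ℝ => G n ω i) := by
  apply Finset.measurable_sum
  intro k _
  simp only [ee, dd]
  by_cases h : k % n < n
  · simp only [h, dif_pos]
    exact (measurable_pi_apply _).sub
      ((Finset.measurable_sum _ fun m _ => measurable_pi_apply m).div_const _)
  · simp only [h, dif_neg, not_false_iff]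
    exact measurable_const

/-- sum invariance under cyclic shift -/
lemma sum_shift [NeZero n] (ω : Fin n → ℝ) (j : Fin n) :
    ∑ m, ω (m + j) = ∑ m, ω m :=
  Fintype.sum_equiv (Equiv.addRight j) _ _ (fun _ => rfl)

/-- key shift identity -/
lemma G_shift [NeZero n] (ω : Fin n → ℝ) (j : Fin n) {i : ℕ} (hi : i ≤ n) :
    G n (fun k => ω (k + j)) i = G n ω (j.val + i) - G n ω j.val := by
  induction i with
  | zero => simp [G]
  | succ i ih =>
    have hi' : i < n := hi
    have h1 : G n (fun k => ω (k + j)) (i+1)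
        = G n (fun k => ω (k + j)) i + ee n (fun k => ω (k + j)) i := by
      rw [G, Finset.sum_range_succ]; rfl
    have h2 : G n ω (j.val + (i+1)) = G n ω (j.val + i) + ee n ω (j.val + i) := by
      rw [show j.val + (i+1) = (j.val + i) + 1 by ring, G, Finset.sum_range_succ]; rfl
    have h3 : ee n (fun k => ω (k + j)) i = ee n ω (j.val + i) := by
      have hlt : (j.val + i) % n < n := Nat.mod_lt _ (NeZero.pos n)
      rw [ee_eq_dd hi', ee, dd, dd, dif_pos hi', dif_pos hlt, sum_shift ω j]
      congr 1
      congr 1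
      apply Fin.ext
      rw [Fin.add_def]
      simp [Nat.add_comm i j.val]
    rw [h1, h2, ih (le_of_lt hi'), h3]
    ring


/-- coefficients of `G` as a linear functional -/
noncomputable def coefG (n i : ℕ) (k : Fin n) : ℝ :=
  (if (k : ℕ) < i then 1 else 0) - (i : ℝ) / n

lemma G_lin (hn : 0 < n) (ω : Fin n → ℝ) {i : ℕ} (hi : i ≤ n) :
    G n ω i = ∑ k : Fin n, coefG n i k * ω k := by
  rw [G_eq_sum_ite ω hi]
  have h1 : (∑ k : Fin n, if (k : ℕ) < i then ω k - (∑ m, ω m) / (n : ℝ) else 0)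
      = (∑ k : Fin n, if (k : ℕ) < i then ω k else 0)
        - ∑ k : Fin n, if (k : ℕ) < i then ((∑ m, ω m) / (n : ℝ)) else 0 := by
    rw [← Finset.sum_sub_distrib]
    exact Finset.sum_congr rfl fun k _ => by split <;> simp
  have h2 : (∑ k : Fin n, if (k : ℕ) < i then ((∑ m, ω m) / (n : ℝ)) else 0)
      = (i : ℝ) * ((∑ m, ω m) / (n : ℝ)) := by
    rw [sum_ite_fin (fun _ => (∑ m, ω m) / (n : ℝ)) hi, Finset.sum_const, Finset.card_range,
      nsmul_eq_mul]
  rw [h1, h2]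
  have h3 : ∑ k : Fin n, coefG n i k * ω k
      = (∑ k : Fin n, (if (k : ℕ) < i then 1 else 0) * ω k)
        - ∑ k : Fin n, ((i : ℝ) / n) * ω k := by
    rw [← Finset.sum_sub_distrib]
    exact Finset.sum_congr rfl fun k _ => by simp only [coefG]; split <;> ring
  rw [h3, ← Finset.mul_sum]
  have h4 : (∑ k : Fin n, (if (k : ℕ) < i then (1:ℝ) else 0) * ω k)
      = ∑ k : Fin n, if (k : ℕ) < i then ω k else 0 := by
    exact Finset.sum_congr rfl fun k _ => by split <;> simp
  rw [h4]
  ring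

lemma coef_diff_ne_zero (hn : 0 < n) {j j' : Fin n} (h : j ≠ j') (k : Fin n) :
    coefG n j.val k - coefG n j'.val k ≠ 0 := by
  have hj : (j.val : ℝ) < n := by exact_mod_cast j.isLt
  have hj' : (j'.val : ℝ) < n := by exact_mod_cast j'.isLt
  have hj0 : (0:ℝ) ≤ (j.val : ℝ) := Nat.cast_nonneg _
  have hj'0 : (0:ℝ) ≤ (j'.val : ℝ) := Nat.cast_nonneg _
  have hne : (j.val : ℝ) ≠ (j'.val : ℝ) := by
    exact_mod_cast fun hf => h (Fin.ext hf)
  have hnpos : (0:ℝ) < n := by exact_mod_cast hn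
  simp only [coefG]
  have hdiv : (j.val : ℝ) / n - (j'.val : ℝ) / n ≠ 0 := by
    rw [div_sub_div_same]
    exact div_ne_zero (sub_ne_zero.2 hne) hnpos.ne'
  have hlt1 : (j.val : ℝ) / n - (j'.val : ℝ) / n < 1 := by
    rw [div_sub_div_same, div_lt_one hnpos]; linarith
  have hgt1 : -1 < (j.val : ℝ) / n - (j'.val : ℝ) / n := by
    rw [div_sub_div_same, neg_lt, ← neg_div, neg_sub, div_lt_one hnpos]; linarith
  split <;> split <;> intro hzero <;>
    first
      | exact hdiv (by linarith)
      | linarith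


lemma pi_null_of_linear {m : ℕ} (c : Fin (m+1) → ℝ) (k0 : Fin (m+1)) (hc : c k0 ≠ 0)
    (μ : Measure ℝ) [IsProbabilityMeasure μ] (hμ : ∀ x : ℝ, μ {x} = 0) :
    (Measure.pi fun _ : Fin (m+1) => μ) {ω | ∑ k, c k * ω k = 0} = 0 := by
  have hmp := measurePreserving_piFinSuccAbove (fun _ : Fin (m+1) => μ) k0
  set e := MeasurableEquiv.piFinSuccAbove (fun _ : Fin (m+1) => ℝ) k0 with he
  set g : (Fin m → ℝ) → ℝ := fun y => -(∑ i, c (k0.succAbove i) * y i) / c k0 with hg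
  have hgm : Measurable g := by
    apply Measurable.div_const
    apply Measurable.neg
    exact Finset.measurable_sum _ (fun i _ => (measurable_pi_apply i).const_mul _)
  have hT : MeasurableSet {p : ℝ × (Fin m → ℝ) | p.1 = g p.2} :=
    measurableSet_eq_fun measurable_fst (hgm.comp measurable_snd)
  have hset : {ω : Fin (m+1) → ℝ | ∑ k, c k * ω k = 0} = e ⁻¹' {p | p.1 = g p.2} := by
    ext ω
    simp only [Set.mem_setOf_eq, Set.mem_preimage]
    have hsum : ∑ k, c k * ω k = c k0 * ω k0 + ∑ i, c (k0.succAbove i) * ω (k0.succAbove i) :=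
      Fin.sum_univ_succAbove (fun k => c k * ω k) k0
    have happ : e ω = (ω k0, fun i => ω (k0.succAbove i)) := rfl
    rw [happ]
    simp only [hg]
    rw [eq_div_iff hc, hsum]
    constructor
    · intro h; nlinarith [h]
    · intro h; nlinarith [h]
  rw [hset, hmp.measure_preimage hT.nullMeasurableSet]
  rw [Measure.prod_apply_symm hT]
  have : ∀ y : Fin m → ℝ, μ ((fun x => (x, y)) ⁻¹' {p : ℝ × (Fin m → ℝ) | p.1 = g p.2}) = 0 := by
    intro y
    have : ((fun x => (x, y)) ⁻¹' {p : ℝ × (Fin m → ℝ) | p.1 = g p.2}) = {g y} := by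
      ext x; simp
    rw [this]; exact hμ _
  simp only [this]
  simp

lemma ties_null (hn : 0 < n) {j j' : Fin n} (h : j ≠ j')
    (μ : Measure ℝ) [IsProbabilityMeasure μ] (hμ : ∀ x : ℝ, μ {x} = 0) :
    (Measure.pi fun _ : Fin n => μ) {ω | G n ω j.val = G n ω j'.val} = 0 := by
  obtain ⟨m, rfl⟩ := Nat.exists_eq_succ_of_ne_zero hn.ne'
  have hset : {ω : Fin (m+1) → ℝ | G (m+1) ω j.val = G (m+1) ω j'.val}
      = {ω | ∑ k, (coefG (m+1) j.val k - coefG (m+1) j'.val k) * ω k = 0} := by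
    ext ω
    simp only [Set.mem_setOf_eq]
    rw [G_lin hn ω j.isLt.le, G_lin hn ω j'.isLt.le]
    rw [show (∑ k, (coefG (m+1) j.val k - coefG (m+1) j'.val k) * ω k)
        = (∑ k, coefG (m+1) j.val k * ω k) - ∑ k, coefG (m+1) j'.val k * ω k by
      rw [← Finset.sum_sub_distrib]; exact Finset.sum_congr rfl fun k _ => by ring]
    constructor
    · intro he; rw [he]; ring
    · intro he; linarith
  rw [hset]
  exact pi_null_of_linear _ 0 (coef_diff_ne_zero hn h 0) μ hμ


lemma add_mod_mod (a b n : ℕ) : (a + b % n) % n = (a + b) % n := by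
  conv_lhs => rw [Nat.add_mod]
  rw [Nat.mod_mod_of_dvd b dvd_rfl, ← Nat.add_mod]

lemma shift_preimage (hn : 0 < n) (j : Fin n) :
    haveI : NeZero n := ⟨hn.ne'⟩
    (fun (ω : Fin n → ℝ) (k : Fin n) => ω (k + j)) ⁻¹' {ω | ∀ m : Fin n, 0 ≤ G n ω m.val}
      = {ω | ∀ m : Fin n, G n ω j.val ≤ G n ω m.val} := by
  haveI : NeZero n := ⟨hn.ne'⟩
  ext ω
  simp only [Set.mem_preimage, Set.mem_setOf_eq]
  have hG : ∀ m : Fin n, G n (fun k => ω (k + j)) m.val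
      = G n ω (j.val + m.val) - G n ω j.val := fun m => G_shift ω j m.isLt.le
  constructor
  · intro h m
    set r : ℕ := (m.val + n - j.val) % n with hr_def
    have hr : r < n := Nat.mod_lt _ hn
    have key : (j.val + r) % n = m.val := by
      rw [hr_def, add_mod_mod, show j.val + (m.val + n - j.val) = m.val + n by omega,
        Nat.add_mod_right, Nat.mod_eq_of_lt m.isLt]
    have h0 := h ⟨r, hr⟩
    rw [hG ⟨r, hr⟩] at h0
    have : G n ω (j.val + r) = G n ω m.val := by
      rw [← G_mod hn ω (j.val + r), key]
    linarith
  · intro h m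
    rw [hG m]
    have hlt : (j.val + m.val) % n < n := Nat.mod_lt _ hn
    have h1 : G n ω (j.val + m.val) = G n ω ((j.val + m.val) % n) := (G_mod hn ω _).symm
    have h2 : G n ω j.val ≤ G n ω ((j.val + m.val) % n) := h ⟨(j.val + m.val) % n, hlt⟩
    linarith

lemma bound (hn : 0 < n) (μ : Measure ℝ) [IsProbabilityMeasure μ] (hμ : ∀ x : ℝ, μ {x} = 0) :
    (Measure.pi fun _ : Fin n => μ) {ω | ∀ m : Fin n, 0 ≤ G n ω m.val} ≤ ((n : ℝ≥0∞))⁻¹ := by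
  haveI : NeZero n := ⟨hn.ne'⟩
  set P := Measure.pi fun _ : Fin n => μ with hP
  set A := {ω : Fin n → ℝ | ∀ m : Fin n, 0 ≤ G n ω m.val} with hA_def
  have hA : MeasurableSet A := by
    have : A = ⋂ m : Fin n, {ω | 0 ≤ G n ω m.val} := by
      ext ω; simp [hA_def, Set.mem_iInter]
    rw [this]
    exact MeasurableSet.iInter fun m => measurableSet_le measurable_const (measurable_G _)
  set Mi := fun j : Fin n => {ω : Fin n → ℝ | ∀ m : Fin n, G n ω j.val ≤ G n ω m.val} with hMi_def
  have hMi : ∀ j, MeasurableSet (Mi j) := by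
    intro j
    have : Mi j = ⋂ m : Fin n, {ω | G n ω j.val ≤ G n ω m.val} := by
      ext ω; simp [hMi_def, Set.mem_iInter]
    rw [this]
    exact MeasurableSet.iInter fun m => measurableSet_le (measurable_G _) (measurable_G _)
  have hshift : ∀ j : Fin n, MeasurePreserving
      (fun (ω : Fin n → ℝ) (k : Fin n) => ω (k + j)) P P := by
    intro j
    have h := measurePreserving_piCongrLeft (fun _ : Fin n => μ) (Equiv.addRight j).symm
    convert h using 1
    funext ω
    funext i
    simp [MeasurableEquiv.piCongrLeft, Equiv.piCongrLeft]
  have hMieq : ∀ j : Fin n, P (Mi j) = P A := by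
    intro j
    have heq : Mi j = (fun (ω : Fin n → ℝ) (k : Fin n) => ω (k + j)) ⁻¹' A :=
      (shift_preimage hn j).symm
    rw [heq]
    exact (hshift j).measure_preimage hA.nullMeasurableSet
  set Nset := ⋃ j : Fin n, ⋃ j' : Fin n, ⋃ (_ : j ≠ j'), {ω | G n ω j.val = G n ω j'.val}
    with hN_def
  have hNnull : P Nset = 0 :=
    measure_iUnion_null fun j => measure_iUnion_null fun j' =>
      measure_iUnion_null fun hjj' => ties_null hn hjj' μ hμ
  have hNmeas : MeasurableSet Nset :=
    MeasurableSet.iUnion fun j => MeasurableSet.iUnion fun j' =>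
      MeasurableSet.iUnion fun _ => measurableSet_eq_fun (measurable_G _) (measurable_G _)
  set C := fun j : Fin n => Mi j \ Nset with hC_def
  have hCmeas : ∀ j, MeasurableSet (C j) := fun j => (hMi j).diff hNmeas
  have hdisj : Pairwise (Function.onFun Disjoint C) := by
    intro j j' hjj'
    rw [Function.onFun, Set.disjoint_left]
    rintro ω ⟨hω1, hωN⟩ ⟨hω2, _⟩
    apply hωN
    rw [hN_def]
    refine Set.mem_iUnion.2 ⟨j, Set.mem_iUnion.2 ⟨j', Set.mem_iUnion.2 ⟨hjj', ?_⟩⟩⟩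
    exact le_antisymm (hω1 j') (hω2 j)
  have hsum : ∑' j : Fin n, P (C j) = P (⋃ j, C j) := (measure_iUnion hdisj hCmeas).symm
  have hCj : ∀ j, P (C j) = P A := fun j => (measure_diff_null hNnull).trans (hMieq j)
  have hle1 : P (⋃ j, C j) ≤ 1 := by
    rw [show (1 : ℝ≥0∞) = P Set.univ from (measure_univ).symm]
    exact measure_mono (Set.subset_univ _)
  have hfin : (n : ℝ≥0∞) * P A ≤ 1 := by
    calc (n : ℝ≥0∞) * P A = ∑' j : Fin n, P (C j) := by
          rw [tsum_fintype]
          simp [hCj, Finset.sum_const, Finset.card_univ, nsmul_eq_mul]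
      _ = P (⋃ j, C j) := hsum
      _ ≤ 1 := hle1
  rw [ENNReal.le_inv_iff_mul_le, mul_comm]
  exact hfin


lemma event_eq (hn : 0 < n) :
    {ω : Fin n → ℝ | ∀ i : ℕ, 1 ≤ i → i ≤ n - 1 →
        0 ≤ ∑ k : Fin n, if (k : ℕ) < i then ω k - (∑ m, ω m) / (n : ℝ) else 0}
      = {ω | ∀ m : Fin n, 0 ≤ G n ω m.val} := by
  ext ω
  simp only [Set.mem_setOf_eq]
  constructor
  · intro h m
    rcases Nat.eq_zero_or_pos m.val with h0 | hpos
    · simp [G, h0]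
    · rw [G_eq_sum_ite ω m.isLt.le]
      exact h m.val hpos (by have := m.isLt; omega)
  · intro h i h1 h2
    have hi : i ≤ n := by omega
    rw [← G_eq_sum_ite ω hi]
    have hi' : i < n := by omega
    exact h ⟨i, hi'⟩

lemma measurable_sum_ite (n : ℕ) (i : ℕ) :
    Measurable (fun ω : Fin n → ℝ =>
      ∑ k : Fin n, if (k : ℕ) < i then ω k - (∑ m, ω m) / (n : ℝ) else 0) := by
  apply Finset.measurable_sum
  intro k _
  by_cases h : (k : ℕ) < i
  · simp only [h, if_pos]
    exact (measurable_pi_apply _).sub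
      ((Finset.measurable_sum _ fun m _ => measurable_pi_apply m).div_const _)
  · simp only [h, if_neg, not_false_iff]
    exact measurable_const

lemma measurable_eventGE (n : ℕ) :
    MeasurableSet {ω : Fin n → ℝ | ∀ i : ℕ, 1 ≤ i → i ≤ n - 1 →
        0 ≤ ∑ k : Fin n, if (k : ℕ) < i then ω k - (∑ m, ω m) / (n : ℝ) else 0} := by
  have : {ω : Fin n → ℝ | ∀ i : ℕ, 1 ≤ i → i ≤ n - 1 →
        0 ≤ ∑ k : Fin n, if (k : ℕ) < i then ω k - (∑ m, ω m) / (n : ℝ) else 0}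
      = ⋂ i : ℕ, ⋂ (_ : 1 ≤ i), ⋂ (_ : i ≤ n - 1),
        {ω : Fin n → ℝ | 0 ≤ ∑ k : Fin n, if (k : ℕ) < i then ω k - (∑ m, ω m) / (n : ℝ) else 0} := by
    ext ω; simp [Set.mem_iInter]
  rw [this]
  exact MeasurableSet.iInter fun i => MeasurableSet.iInter fun _ => MeasurableSet.iInter fun _ =>
    measurableSet_le measurable_const (measurable_sum_ite n i)

lemma neg_preimage (n : ℕ) :
    (fun (ω : Fin n → ℝ) (k : Fin n) => -(ω k)) ⁻¹'
      {ω : Fin n → ℝ | ∀ i : ℕ, 1 ≤ i → i ≤ n - 1 →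
        0 ≤ ∑ k : Fin n, if (k : ℕ) < i then ω k - (∑ m, ω m) / (n : ℝ) else 0}
      = {ω : Fin n → ℝ | ∀ i : ℕ, 1 ≤ i → i ≤ n - 1 →
        (∑ k : Fin n, if (k : ℕ) < i then ω k - (∑ m, ω m) / (n : ℝ) else 0) ≤ 0} := by
  ext ω
  simp only [Set.mem_preimage, Set.mem_setOf_eq]
  have key : ∀ i : ℕ,
      (∑ k : Fin n, if (k : ℕ) < i then (-(ω k)) - (∑ m : Fin n, -(ω m)) / (n : ℝ) else 0)
      = -(∑ k : Fin n, if (k : ℕ) < i then ω k - (∑ m, ω m) / (n : ℝ) else 0) := by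
    intro i
    rw [← Finset.sum_neg_distrib]
    apply Finset.sum_congr rfl
    intro k _
    have hs : (∑ m : Fin n, -(ω m)) = -(∑ m, ω m) := by rw [← Finset.sum_neg_distrib]
    rw [hs]
    split
    · ring
    · ring
  constructor
  · intro h i h1 h2
    have := h i h1 h2
    rw [key i] at this
    linarith
  · intro h i h1 h2
    rw [key i]
    linarith [h i h1 h2]

lemma gaussian_noatom {σ : ℝ} (hσ : 0 < σ) (x : ℝ) :
    gaussianReal 0 ⟨σ ^ 2, sq_nonneg σ⟩ {x} = 0 := by
  have hv : (⟨σ ^ 2, sq_nonneg σ⟩ : NNReal) ≠ 0 := by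
    intro hf
    have : σ ^ 2 = 0 := congrArg Subtype.val hf
    nlinarith
  exact gaussianReal_absolutelyContinuous 0 hv (measure_singleton x)

lemma neg_measurePreserving {σ : ℝ} (hσ : 0 < σ) (n : ℕ) :
    MeasurePreserving (fun (ω : Fin n → ℝ) (k : Fin n) => -(ω k))
      (Measure.pi fun _ : Fin n => gaussianReal 0 ⟨σ ^ 2, sq_nonneg σ⟩)
      (Measure.pi fun _ : Fin n => gaussianReal 0 ⟨σ ^ 2, sq_nonneg σ⟩) := by
  haveI := instIsProbabilityMeasureGaussianReal 0 ⟨σ ^ 2, sq_nonneg σ⟩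
  apply measurePreserving_pi
  intro i
  constructor
  · exact measurable_neg
  · have h1 : (fun x : ℝ => -x) = fun x : ℝ => (-1 : ℝ) * x := funext fun x => by ring
    rw [show (Neg.neg : ℝ → ℝ) = (fun x : ℝ => (-1 : ℝ) * x) from h1]
    rw [show (fun x : ℝ => (-1 : ℝ) * x) = ((-1 : ℝ) * ·) from rfl]
    erw [gaussianReal_map_const_mul (-1 : ℝ)]
    congr 1
    · ring
    · erw [show NNReal.mk ((-1 : ℝ) ^ 2) (sq_nonneg _) = 1 by ext; norm_num, one_mul]

end DBridge


open MeasureTheory ProbabilityTheory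

/-- for `ε₁,…,ε_n` i.i.d. `N(0,σ²)` with sample mean `ε̄` and
`Wᵢ = Σ_{k=1}^i (ε_k − ε̄)`, the probability that the centered partial sums stay
one-signed tends to zero:
`ℙ(Wᵢ ≥ 0 for all i = 1,…,n−1) → 0` as `n → ∞`, and likewise for `{Wᵢ ≤ 0 for all i}`. -/
theorem discrete_bridge_one_signed_prob_tendsto_zero
    (σ : ℝ) (hσ : 0 < σ) :
    Filter.Tendsto (fun n : ℕ =>
        (Measure.pi fun _ : Fin n => gaussianReal 0 ⟨σ ^ 2, sq_nonneg σ⟩)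
          {ω : Fin n → ℝ | ∀ i : ℕ, 1 ≤ i → i ≤ n - 1 →
            0 ≤ ∑ k : Fin n, if (k : ℕ) < i then ω k - (∑ m, ω m) / (n : ℝ) else 0})
      Filter.atTop (nhds 0) ∧
    Filter.Tendsto (fun n : ℕ =>
        (Measure.pi fun _ : Fin n => gaussianReal 0 ⟨σ ^ 2, sq_nonneg σ⟩)
          {ω : Fin n → ℝ | ∀ i : ℕ, 1 ≤ i → i ≤ n - 1 →
            (∑ k : Fin n, if (k : ℕ) < i then ω k - (∑ m, ω m) / (n : ℝ) else 0) ≤ 0})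
      Filter.atTop (nhds 0) := by
  have key : ∀ n : ℕ, 0 < n →
      (Measure.pi fun _ : Fin n => gaussianReal 0 ⟨σ ^ 2, sq_nonneg σ⟩)
        {ω : Fin n → ℝ | ∀ i : ℕ, 1 ≤ i → i ≤ n - 1 →
          0 ≤ ∑ k : Fin n, if (k : ℕ) < i then ω k - (∑ m, ω m) / (n : ℝ) else 0}
        ≤ ((n : ℝ≥0∞))⁻¹ := by
    intro n hn
    rw [DBridge.event_eq hn]
    haveI := instIsProbabilityMeasureGaussianReal 0 ⟨σ ^ 2, sq_nonneg σ⟩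
    exact DBridge.bound hn _ (DBridge.gaussian_noatom hσ)
  have part1 : Filter.Tendsto (fun n : ℕ =>
      (Measure.pi fun _ : Fin n => gaussianReal 0 ⟨σ ^ 2, sq_nonneg σ⟩)
        {ω : Fin n → ℝ | ∀ i : ℕ, 1 ≤ i → i ≤ n - 1 →
          0 ≤ ∑ k : Fin n, if (k : ℕ) < i then ω k - (∑ m, ω m) / (n : ℝ) else 0})
      Filter.atTop (nhds 0) := by
    apply tendsto_of_tendsto_of_tendsto_of_le_of_le' tendsto_const_nhds
      ENNReal.tendsto_inv_nat_nhds_zero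
    · exact Filter.Eventually.of_forall fun n => zero_le
    · exact Filter.eventually_atTop.2 ⟨1, fun n hn => key n hn⟩
  have heq : ∀ n : ℕ,
      (Measure.pi fun _ : Fin n => gaussianReal 0 ⟨σ ^ 2, sq_nonneg σ⟩)
        {ω : Fin n → ℝ | ∀ i : ℕ, 1 ≤ i → i ≤ n - 1 →
          (∑ k : Fin n, if (k : ℕ) < i then ω k - (∑ m, ω m) / (n : ℝ) else 0) ≤ 0}
      = (Measure.pi fun _ : Fin n => gaussianReal 0 ⟨σ ^ 2, sq_nonneg σ⟩)
        {ω : Fin n → ℝ | ∀ i : ℕ, 1 ≤ i → i ≤ n - 1 →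
          0 ≤ ∑ k : Fin n, if (k : ℕ) < i then ω k - (∑ m, ω m) / (n : ℝ) else 0} := by
    intro n
    rw [← DBridge.neg_preimage n]
    exact (DBridge.neg_measurePreserving hσ n).measure_preimage
      (DBridge.measurable_eventGE n).nullMeasurableSet
  refine ⟨part1, ?_⟩
  simp only [heq]
  exact part1
end
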